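/- arXiv:1905.08837 — 3 statements merged into one kernel-verified Lean document; each statement's English description precedes it below -/
import Mathlib

section
/- Under the assumptions of the equality chain rule (f strictly differentiable at x̄; ϑ convex, l.s.c. near f(x̄), and Lipschitz relative to its domain with constant ℓ; x ↦ f(x) − dom ϑ metrically subregular at (x̄,0) with constant κ): for every v ∈ ∂(ϑ∘f)(x̄) there exists λ ∈ ∂ϑ(f(x̄)) with v = ∇f(x̄)*λ and ‖λ‖ ≤ ℓ + κ‖v‖ + κℓ‖∇f(x̄)‖. -/
open Filter Topology Metric Set

noncomputable section

abbrev Euc (n : ℕ) := EuclideanSpace ℝ (Fin n)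

def edom {X : Type*} (φ : X → EReal) : Set X := {x | φ x ≠ ⊤}

section NormedDefs

variable {X Y : Type*} [NormedAddCommGroup X] [NormedSpace ℝ X]
  [NormedAddCommGroup Y] [NormedSpace ℝ Y]

/-- Bouligand (contingent) tangent cone. -/
def tangentConeB (Ω : Set X) (x : X) : Set X :=
  {w | ∃ t : ℕ → ℝ, ∃ wk : ℕ → X, (∀ k, 0 < t k) ∧ Tendsto t atTop (𝓝 0) ∧
      Tendsto wk atTop (𝓝 w) ∧ ∀ k, x + t k • wk k ∈ Ω}

/-- Second-order tangent set. -/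
def secondTangent (Ω : Set X) (x w : X) : Set X :=
  {u | ∃ t : ℕ → ℝ, ∃ uk : ℕ → X, (∀ k, 0 < t k) ∧ Tendsto t atTop (𝓝 0) ∧
      Tendsto uk atTop (𝓝 u) ∧ ∀ k, x + t k • w + ((t k) ^ 2 / 2) • uk k ∈ Ω}

/-- Subderivative (first-order epi-derivative). -/
def subderiv (φ : X → EReal) (x w : X) : EReal :=
  liminf (fun p : ℝ × X => ((p.1⁻¹ : ℝ) : EReal) * (φ (x + p.1 • p.2) - φ x))
    ((𝓝[>] (0:ℝ)) ×ˢ 𝓝 w)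

/-- `f` is twice differentiable at `x`: differentiable nearby and its derivative is
differentiable at `x`. -/
def TwiceDiffAt (f : X → Y) (x : X) : Prop :=
  (∀ᶠ y in 𝓝 x, DifferentiableAt ℝ f y) ∧ DifferentiableAt ℝ (fderiv ℝ f) x

/-- The second derivative of `f` at `x` evaluated at `(w, w)`. -/
def D2 (f : X → Y) (x w : X) : Y := fderiv ℝ (fderiv ℝ f) x w w

/-- Lipschitz continuity of `φ` around `x` relative to its domain, with constant `ℓ`. -/
def LipRelDom (φ : X → EReal) (x : X) (ℓ : ℝ) : Prop :=
  ∃ U ∈ 𝓝 x, ∀ y ∈ U, ∀ z ∈ U, φ y ≠ ⊤ → φ z ≠ ⊤ →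
    φ y ≤ φ z + ((ℓ * ‖y - z‖ : ℝ) : EReal)

/-- Metric subregularity of the mapping `x ↦ f x - D` at `(x, 0)` with constant `κ`:
the metric subregularity qualification condition. -/
def MSQCAt (f : X → Y) (D : Set Y) (x : X) (κ : ℝ) : Prop :=
  0 ≤ κ ∧ ∀ᶠ u in 𝓝 x, Metric.infDist u (f ⁻¹' D) ≤ κ * Metric.infDist (f u) D

/-- Epigraph of an extended-real-valued function. -/
def epiSet (ϑ : Y → EReal) : Set (Y × ℝ) := {p | ϑ p.1 ≤ (p.2 : EReal)}

end NormedDefs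

section InnerDefs

variable {X : Type*} [NormedAddCommGroup X] [InnerProductSpace ℝ X]

/-- Regular (Fréchet) subdifferential. -/
def frechetSubdiff (φ : X → EReal) (x : X) : Set X :=
  {v | ∀ ε : ℝ, 0 < ε → ∀ᶠ y in 𝓝 x,
      φ x + (((inner ℝ v (y - x) : ℝ) - ε * ‖y - x‖ : ℝ) : EReal) ≤ φ y}

/-- Limiting (Mordukhovich) subdifferential. -/
def limSubdiff (φ : X → EReal) (x : X) : Set X :=
  {v | ∃ xk : ℕ → X, ∃ vk : ℕ → X, Tendsto xk atTop (𝓝 x) ∧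
      Tendsto (fun k => φ (xk k)) atTop (𝓝 (φ x)) ∧
      Tendsto vk atTop (𝓝 v) ∧ ∀ k, vk k ∈ frechetSubdiff φ (xk k)}

/-- Proximal subdifferential. -/
def proxSubdiff (φ : X → EReal) (x : X) : Set X :=
  {v | ∃ r > (0:ℝ), ∃ γ > (0:ℝ), ∀ y ∈ Metric.ball x γ,
      φ x + (((inner ℝ v (y - x) : ℝ) - r / 2 * ‖y - x‖ ^ 2 : ℝ) : EReal) ≤ φ y}

/-- Second-order difference quotient. -/
def quadDiff (φ : X → EReal) (x v : X) (t : ℝ) (u : X) : EReal :=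
  ((2 / t ^ 2 : ℝ) : EReal) * (φ (x + t • u) - φ x - ((t * (inner ℝ v u : ℝ) : ℝ) : EReal))

/-- Second subderivative of `φ` at `x` for `v`. -/
def secondSubderiv (φ : X → EReal) (x v w : X) : EReal :=
  liminf (fun p : ℝ × X => quadDiff φ x v p.1 p.2) ((𝓝[>] (0:ℝ)) ×ˢ 𝓝 w)

/-- Parabolic subderivative of `φ` at `x` for `w` with respect to `z`. -/
def parabolicSubderiv (φ : X → EReal) (x w z : X) : EReal :=
  liminf (fun p : ℝ × X =>
      ((2 / p.1 ^ 2 : ℝ) : EReal) *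
        (φ (x + p.1 • w + (p.1 ^ 2 / 2) • p.2) - φ x - (p.1 : EReal) * subderiv φ x w))
    ((𝓝[>] (0:ℝ)) ×ˢ 𝓝 z)

/-- Critical cone of `φ` at `x` for `v`. -/
def critCone (φ : X → EReal) (x v : X) : Set X :=
  {w | subderiv φ x w = ((inner ℝ v w : ℝ) : EReal)}

/-- Convex polyhedral set. -/
def IsPolyhedral (Ω : Set X) : Prop :=
  ∃ (k : ℕ) (c : Fin k → X) (b : Fin k → ℝ), Ω = {x | ∀ i, (inner ℝ (c i) x : ℝ) ≤ b i}

/-- Polar cone. -/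
def polarCone (C : Set X) : Set X := {y | ∀ u ∈ C, (inner ℝ y u : ℝ) ≤ 0}

/-- A piecewise linear-quadratic representation of `ϑ`. -/
structure PLQRepr (ϑ : X → EReal) where
  s : ℕ
  piece : Fin s → Set X
  A : Fin s → (X →L[ℝ] X)
  a : Fin s → X
  cst : Fin s → ℝ
  poly : ∀ i, IsPolyhedral (piece i)
  symm : ∀ i x y, (inner ℝ (A i x) y : ℝ) = (inner ℝ x (A i y) : ℝ)
  dom_eq : edom ϑ = ⋃ i, piece i
  val : ∀ i, ∀ x ∈ piece i,
    ϑ x = ((1 / 2 * (inner ℝ (A i x) x : ℝ) + (inner ℝ (a i) x : ℝ) + cst i : ℝ) : EReal)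

/-- `ϑ` is piecewise linear-quadratic. -/
def IsPLQ (ϑ : X → EReal) : Prop := Nonempty (PLQRepr ϑ)

/-- Twice epi-differentiability of `φ` at `x` for `v`, via the recovery-sequence
characterization of epi-convergence of second-order difference quotients. -/
def TwiceEpiDiffAt (φ : X → EReal) (x v : X) : Prop :=
  ∀ w : X, ∀ t : ℕ → ℝ, (∀ k, 0 < t k) → Tendsto t atTop (𝓝 0) →
    ∃ wk : ℕ → X, Tendsto wk atTop (𝓝 w) ∧
      Tendsto (fun k => quadDiff φ x v (t k) (wk k)) atTop (𝓝 (secondSubderiv φ x v w))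

end InnerDefs

/-- Convexity for extended-real-valued functions. -/
def ERealConvexOn {X : Type*} [AddCommGroup X] [Module ℝ X] (φ : X → EReal) : Prop :=
  ∀ x y : X, ∀ t : ℝ, 0 ≤ t → t ≤ 1 →
    φ (t • x + (1 - t) • y) ≤ (t : EReal) * φ x + ((1 - t : ℝ) : EReal) * φ y

/-- The Lagrange multiplier set associated with `(x, v)` for the composition `ϑ ∘ f`. -/
def multSet {n m : ℕ} (f : Euc n → Euc m) (ϑ : Euc m → EReal) (x : Euc n) (v : Euc n) :
    Set (Euc m) :=
  {lam | lam ∈ limSubdiff ϑ (f x) ∧ ContinuousLinearMap.adjoint (fderiv ℝ f x) lam = v}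

section AuxLemmas

set_option maxHeartbeats 2000000 in
lemma duality {n m : ℕ} (ϑ : Euc m → EReal) (hconv : ERealConvexOn ϑ)
    (hbot : ∀ y, ϑ y ≠ ⊥) (y0 : Euc m) (c : ℝ) (hc : ϑ y0 = (c : EReal))
    (T : Euc n →L[ℝ] Euc m) (vk : Euc n) (α ρ : ℝ) (hα : 0 ≤ α) (hρ : 0 ≤ ρ)
    (key : ∀ h z, ((c + ((inner ℝ vk h : ℝ) - α*‖h‖ - ρ*‖T h - z‖) : ℝ) : EReal) ≤ ϑ (y0 + z)) :
    ∃ lam : Euc m, ‖lam‖ ≤ ρ ∧ ‖vk - ContinuousLinearMap.adjoint T lam‖ ≤ α ∧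
      ∀ z, ((c + (inner ℝ lam z : ℝ) : ℝ) : EReal) ≤ ϑ (y0 + z) := by
  classical
  -- the set of values of the penalized problem
  set S : Euc m → Set ℝ := fun w => {x : ℝ | ∃ h z, ϑ (y0 + z) ≠ ⊤ ∧
    x = (ϑ (y0 + z)).toReal - (inner ℝ vk h : ℝ) + α*‖h‖ + ρ*‖T h - z + w‖} with hS
  have hmemS : ∀ w h z (hz : ϑ (y0+z) ≠ ⊤),
      (ϑ (y0 + z)).toReal - (inner ℝ vk h : ℝ) + α*‖h‖ + ρ*‖T h - z + w‖ ∈ S w := by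
    intro w h z hz; exact ⟨h, z, hz, rfl⟩
  have hne : ∀ w, (S w).Nonempty := by
    intro w
    refine ⟨_, hmemS w 0 0 (by simp [hc])⟩
  have keyR : ∀ h z, ϑ (y0+z) ≠ ⊤ →
      c + ((inner ℝ vk h : ℝ) - α*‖h‖ - ρ*‖T h - z‖) ≤ (ϑ (y0+z)).toReal := by
    intro h z hz
    have := key h z
    have h2 := EReal.toReal_le_toReal this (EReal.coe_ne_bot _) hz
    simpa only [EReal.toReal_coe] using h2
  have hlb : ∀ w, ∀ x ∈ S w, c - ρ*‖w‖ ≤ x := by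
    intro w x hx
    obtain ⟨h, z, hz, rfl⟩ := hx
    have h1 := keyR h z hz
    have h2 : ‖T h - z‖ ≤ ‖T h - z + w‖ + ‖w‖ := by
      have := norm_sub_le (T h - z + w) w; simpa using this
    nlinarith [norm_nonneg (T h - z), norm_nonneg w, norm_nonneg (T h - z + w)]
  have hbdd : ∀ w, BddBelow (S w) := fun w => ⟨c - ρ*‖w‖, fun x hx => hlb w x hx⟩
  set Vt : Euc m → ℝ := fun w => sInf (S w) with hVt
  have hVt_lb : ∀ w, c - ρ*‖w‖ ≤ Vt w := fun w => le_csInf (hne w) (hlb w)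
  have hVt_ub : ∀ w, Vt w ≤ c + ρ*‖w‖ := by
    intro w
    have := csInf_le (hbdd w) (hmemS w 0 0 (by simp [hc]))
    simpa [hc] using this
  have hVt0 : Vt 0 = c := le_antisymm (by simpa using hVt_ub 0) (by simpa using hVt_lb 0)
  -- Lipschitz-type bound
  have hVt_lip : ∀ w w', Vt w' ≤ Vt w + ρ*‖w' - w‖ := by
    intro w w'
    have : Vt w' - ρ*‖w' - w‖ ≤ Vt w := by
      refine le_csInf (hne w) ?_
      intro x hx
      obtain ⟨h, z, hz, rfl⟩ := hx
      have h1 := csInf_le (hbdd w') (hmemS w' h z hz)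
      have h2 : ‖T h - z + w'‖ ≤ ‖T h - z + w‖ + ‖w' - w‖ := by
        have := norm_add_le (T h - z + w) (w' - w); simpa [add_sub_cancel, add_assoc] using this
      nlinarith
    linarith
  -- strict epigraph is open and convex
  set E : Set (Euc m × ℝ) := {p | Vt p.1 < p.2} with hE
  have hEopen : IsOpen E := by
    rw [Metric.isOpen_iff]
    rintro ⟨w, t⟩ hp
    simp only [hE, mem_setOf_eq] at hp
    have hr2 : (0:ℝ) < ρ + 2 := by linarith
    set ε := (t - Vt w)/(ρ+2) with hεdef
    have hεpos : 0 < ε := div_pos (by linarith) hr2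
    refine ⟨ε, hεpos, ?_⟩
    rintro ⟨w', t'⟩ hd
    have hd1 : dist w' w < ε := lt_of_le_of_lt (by rw [Prod.dist_eq]; exact le_max_left _ _) hd
    have hd2 : dist t' t < ε := lt_of_le_of_lt (by rw [Prod.dist_eq]; exact le_max_right _ _) hd
    simp only [hE, mem_setOf_eq]
    have h1 := hVt_lip w w'
    rw [dist_eq_norm] at hd1
    have h2 : |t' - t| < ε := by rwa [Real.dist_eq] at hd2
    have h3 : ρ * ‖w' - w‖ ≤ ρ * ε := mul_le_mul_of_nonneg_left (le_of_lt hd1) hρ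
    have h4 : t - t' ≤ |t' - t| := by rw [abs_sub_comm]; exact le_abs_self _
    have hεeq : ε * (ρ+2) = t - Vt w := by rw [hεdef, div_mul_cancel₀ _ (ne_of_gt hr2)]
    have h5 : t - t' < ε := lt_of_le_of_lt h4 h2
    nlinarith
  have hEconv : Convex ℝ E := by
    rintro ⟨w1, t1⟩ hp1 ⟨w2, t2⟩ hp2 a b ha hb hab
    simp only [hE, mem_setOf_eq] at hp1 hp2 ⊢
    obtain ⟨x1, hx1, hx1'⟩ := exists_lt_of_csInf_lt (hne w1) hp1
    obtain ⟨x2, hx2, hx2'⟩ := exists_lt_of_csInf_lt (hne w2) hp2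
    obtain ⟨h1, z1, hz1, rfl⟩ := hx1
    obtain ⟨h2, z2, hz2, rfl⟩ := hx2
    -- convex combination
    have hconv' := hconv (y0 + z1) (y0 + z2) a ha (by linarith)
    have hb' : (1 - a) = b := by linarith
    rw [hb'] at hconv'
    have hcomb : a • (y0 + z1) + b • (y0 + z2) = y0 + (a • z1 + b • z2) := by
      have hy : a • y0 + b • y0 = y0 := by rw [← add_smul, hab, one_smul]
      calc a • (y0 + z1) + b • (y0 + z2) = (a • y0 + b • y0) + (a • z1 + b • z2) := by module
      _ = y0 + (a • z1 + b • z2) := by rw [hy]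
    rw [hcomb] at hconv'
    set r1 := (ϑ (y0 + z1)).toReal
    set r2 := (ϑ (y0 + z2)).toReal
    have hϑ1 : ϑ (y0 + z1) = (r1 : EReal) := (EReal.coe_toReal hz1 (hbot _)).symm
    have hϑ2 : ϑ (y0 + z2) = (r2 : EReal) := (EReal.coe_toReal hz2 (hbot _)).symm
    rw [hϑ1, hϑ2] at hconv'
    have hcoe : (a : EReal) * (r1 : EReal) + (b : EReal) * (r2 : EReal) = ((a*r1 + b*r2 : ℝ) : EReal) := by
      rw [← EReal.coe_mul, ← EReal.coe_mul, ← EReal.coe_add]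
    rw [hcoe] at hconv'
    have hztop : ϑ (y0 + (a • z1 + b • z2)) ≠ ⊤ := by
      intro h
      rw [h] at hconv'
      exact (EReal.coe_ne_top _) (top_le_iff.mp hconv')
    have htoReal : (ϑ (y0 + (a • z1 + b • z2))).toReal ≤ a*r1 + b*r2 := by
      have := EReal.toReal_le_toReal hconv' (hbot _) (EReal.coe_ne_top _)
      simpa only [EReal.toReal_coe] using this
    -- candidate element
    have helem := hmemS (a • w1 + b • w2) (a • h1 + b • h2) (a • z1 + b • z2) hztop
    have hVle := csInf_le (hbdd _) helem
    refine lt_of_le_of_lt hVle ?_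
    have hinner : (inner ℝ vk (a • h1 + b • h2) : ℝ) = a * (inner ℝ vk h1 : ℝ) + b * (inner ℝ vk h2 : ℝ) := by
      rw [inner_add_right, real_inner_smul_right, real_inner_smul_right]
    have hnh : ‖a • h1 + b • h2‖ ≤ a*‖h1‖ + b*‖h2‖ := by
      calc ‖a • h1 + b • h2‖ ≤ ‖a • h1‖ + ‖b • h2‖ := norm_add_le _ _
      _ = a*‖h1‖ + b*‖h2‖ := by rw [norm_smul, norm_smul, Real.norm_eq_abs, Real.norm_eq_abs, abs_of_nonneg ha, abs_of_nonneg hb]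
    have hnT : ‖T (a • h1 + b • h2) - (a • z1 + b • z2) + (a • w1 + b • w2)‖ ≤
        a*‖T h1 - z1 + w1‖ + b*‖T h2 - z2 + w2‖ := by
      have heq : T (a • h1 + b • h2) - (a • z1 + b • z2) + (a • w1 + b • w2) =
          a • (T h1 - z1 + w1) + b • (T h2 - z2 + w2) := by
        rw [map_add, map_smul, map_smul]; module
      rw [heq]
      calc _ ≤ ‖a • (T h1 - z1 + w1)‖ + ‖b • (T h2 - z2 + w2)‖ := norm_add_le _ _
      _ = a*‖T h1 - z1 + w1‖ + b*‖T h2 - z2 + w2‖ := by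
        rw [norm_smul, norm_smul, Real.norm_eq_abs, Real.norm_eq_abs, abs_of_nonneg ha, abs_of_nonneg hb]
    have : (ϑ (y0 + (a • z1 + b • z2))).toReal - (inner ℝ vk (a • h1 + b • h2) : ℝ)
        + α*‖a • h1 + b • h2‖ + ρ*‖T (a • h1 + b • h2) - (a • z1 + b • z2) + (a • w1 + b • w2)‖
        ≤ a * (r1 - (inner ℝ vk h1 : ℝ) + α*‖h1‖ + ρ*‖T h1 - z1 + w1‖)
          + b * (r2 - (inner ℝ vk h2 : ℝ) + α*‖h2‖ + ρ*‖T h2 - z2 + w2‖) := by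
      rw [hinner]
      nlinarith [mul_le_mul_of_nonneg_left hnh hα, mul_le_mul_of_nonneg_left hnT hρ]
    calc _ ≤ _ := this
    _ < a * t1 + b * t2 := by
      rcases eq_or_lt_of_le ha with ha0 | ha0
      · rcases eq_or_lt_of_le hb with hb0 | hb0
        · exfalso; rw [← ha0, ← hb0] at hab; simp at hab
        · rw [← ha0]; simpa using mul_lt_mul_of_pos_left hx2' hb0
      · rcases eq_or_lt_of_le hb with hb0 | hb0
        · rw [← hb0]; simpa using mul_lt_mul_of_pos_left hx1' ha0
        · exact add_lt_add (mul_lt_mul_of_pos_left hx1' ha0) (mul_lt_mul_of_pos_left hx2' hb0)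
  -- separation
  have hnotin : ((0 : Euc m), c) ∉ E := by simp [hE, hVt0]
  obtain ⟨g, hg⟩ := geometric_hahn_banach_point_open hEconv hEopen hnotin
  have hgc : g ((0 : Euc m), c) = c * g (0, 1) := by
    have : ((0 : Euc m), c) = c • ((0 : Euc m), (1:ℝ)) := by simp [Prod.smul_mk]
    rw [this, map_smul]; simp
  have ha0pos : 0 < g ((0:Euc m), 1) := by
    have h1 := hg ((0:Euc m), c+1) (by simp [hE, hVt0])
    have h2 : g ((0:Euc m), c+1) = (c+1) * g (0,1) := by
      have : ((0 : Euc m), c+1) = (c+1) • ((0 : Euc m), (1:ℝ)) := by simp [Prod.smul_mk]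
      rw [this, map_smul]; simp
    rw [hgc, h2] at h1
    nlinarith
  set a0 := g ((0:Euc m), 1) with ha0
  -- the subgradient inequality: ∀ w, c ≤ g(w,0)/a0 + Vt w
  have hsub : ∀ w, c * a0 ≤ g (w, 0) + Vt w * a0 := by
    intro w
    have hgen : ∀ t, Vt w < t → c * a0 < g (w, 0) + t * a0 := by
      intro t ht
      have h1 := hg (w, t) (by simp [hE, ht])
      have h2 : g (w, t) = g (w, 0) + t * a0 := by
        have : (w, t) = ((w, 0) : Euc m × ℝ) + t • ((0:Euc m), (1:ℝ)) := by simp [Prod.smul_mk]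
        rw [this, map_add, map_smul]; simp [ha0, smul_eq_mul]
      rw [hgc, h2] at h1; linarith
    by_contra hcon
    push_neg at hcon
    -- choose t slightly above Vt w
    have hd : 0 < (c * a0 - (g (w,0) + Vt w * a0)) / a0 := by
      apply div_pos; linarith; exact ha0pos
    have := hgen (Vt w + (c * a0 - (g (w,0) + Vt w * a0)) / a0) (by linarith)
    rw [add_mul, div_mul_cancel₀] at this
    · linarith
    · exact ne_of_gt ha0pos
  -- define lam
  set lf : Euc m →L[ℝ] ℝ := -(a0⁻¹) • (g.comp (ContinuousLinearMap.inl ℝ (Euc m) ℝ)) with hlf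
  set lam := (InnerProductSpace.toDual ℝ (Euc m)).symm lf with hlam
  have hlam_inner : ∀ w, (inner ℝ lam w : ℝ) = -(g (w, 0)) / a0 := by
    intro w
    have := InnerProductSpace.toDual_symm_apply (𝕜 := ℝ) (E := Euc m) (y := lf) (x := w)
    rw [← hlam] at this
    rw [this]
    simp [hlf, ContinuousLinearMap.comp_apply, ContinuousLinearMap.inl_apply, neg_div, div_eq_inv_mul]
  have hsub' : ∀ w, c + (inner ℝ lam w : ℝ) ≤ Vt w := by
    intro w
    have h1 := hsub w
    rw [hlam_inner]
    have h2 : c - Vt w ≤ g (w,0) / a0 := by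
      rw [le_div_iff₀ ha0pos]; linarith
    have : -(g (w,0)) / a0 ≤ Vt w - c := by
      rw [neg_div, neg_le]; linarith
    linarith
  refine ⟨lam, ?_, ?_, ?_⟩
  · -- ‖lam‖ ≤ ρ
    have h1 := hsub' lam
    have h2 := hVt_ub lam
    have h3 : (inner ℝ lam lam : ℝ) = ‖lam‖^2 := real_inner_self_eq_norm_sq lam
    rcases eq_or_lt_of_le (norm_nonneg lam) with h0 | h0
    · rw [← h0]; exact hρ
    · nlinarith
  · -- ‖vk - T.adjoint lam‖ ≤ α
    have hkey : ∀ h : Euc n, (inner ℝ (vk - ContinuousLinearMap.adjoint T lam) h : ℝ) ≤ α * ‖h‖ := by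
      intro h
      have h1 := hsub' (-(T h))
      have h2 : Vt (-(T h)) ≤ c - (inner ℝ vk h : ℝ) + α*‖h‖ := by
        have := csInf_le (hbdd _) (hmemS (-(T h)) h 0 (by simp [hc]))
        simpa [hc] using this
      have h3 : (inner ℝ lam (-(T h)) : ℝ) = -(inner ℝ lam (T h) : ℝ) := by rw [inner_neg_right]
      rw [h3] at h1
      have h4 : (inner ℝ (vk - ContinuousLinearMap.adjoint T lam) h : ℝ)
          = (inner ℝ vk h : ℝ) - (inner ℝ lam (T h) : ℝ) := by
        rw [inner_sub_left, ContinuousLinearMap.adjoint_inner_left]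
      rw [h4]; linarith
    have h1 := hkey (vk - ContinuousLinearMap.adjoint T lam)
    have h3 : (inner ℝ (vk - ContinuousLinearMap.adjoint T lam) (vk - ContinuousLinearMap.adjoint T lam) : ℝ)
        = ‖vk - ContinuousLinearMap.adjoint T lam‖^2 := real_inner_self_eq_norm_sq _
    rcases eq_or_lt_of_le (norm_nonneg (vk - ContinuousLinearMap.adjoint T lam)) with h0 | h0
    · rw [← h0]; exact hα
    · nlinarith
  · intro z
    by_cases hz : ϑ (y0 + z) = ⊤
    · rw [hz]; exact le_top
    · have h1 := hsub' z
      have h2 : Vt z ≤ (ϑ (y0 + z)).toReal := by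
        have := csInf_le (hbdd z) (hmemS z 0 z hz)
        simpa using this
      have h3 : c + (inner ℝ lam z : ℝ) ≤ (ϑ (y0+z)).toReal := le_trans h1 h2
      rw [← EReal.coe_toReal hz (hbot _)]
      exact_mod_cast h3


lemma localToGlobal {n m : ℕ} (ϑ : Euc m → EReal) (hconv : ERealConvexOn ϑ)
    (hbot : ∀ y, ϑ y ≠ ⊥) (y0 : Euc m) (c : ℝ) (hc : ϑ y0 = (c : EReal))
    (T : Euc n →L[ℝ] Euc m) (vk : Euc n) (α ρ : ℝ) (r : ℝ) (hr : 0 < r)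
    (loc : ∀ h z, ‖h‖ ≤ r → ‖z‖ ≤ r →
      ((c + ((inner ℝ vk h : ℝ) - α*‖h‖ - ρ*‖T h - z‖) : ℝ) : EReal) ≤ ϑ (y0 + z)) :
    ∀ h z, ((c + ((inner ℝ vk h : ℝ) - α*‖h‖ - ρ*‖T h - z‖) : ℝ) : EReal) ≤ ϑ (y0 + z) := by
  intro h z
  by_cases hz : ϑ (y0 + z) = ⊤
  · rw [hz]; exact le_top
  set b := (ϑ (y0 + z)).toReal with hb
  have hϑz : ϑ (y0 + z) = (b : EReal) := (EReal.coe_toReal hz (hbot _)).symm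
  set t := r / (‖h‖ + ‖z‖ + r) with ht
  have hden : 0 < ‖h‖ + ‖z‖ + r := by positivity
  have htpos : 0 < t := div_pos hr hden
  have ht1 : t ≤ 1 := by
    rw [div_le_one hden]; nlinarith [norm_nonneg h, norm_nonneg z]
  have hth : ‖t • h‖ ≤ r := by
    rw [norm_smul, Real.norm_eq_abs, abs_of_pos htpos, ht, div_mul_eq_mul_div, div_le_iff₀ hden]
    nlinarith [norm_nonneg h, norm_nonneg z]
  have htz : ‖t • z‖ ≤ r := by
    rw [norm_smul, Real.norm_eq_abs, abs_of_pos htpos, ht, div_mul_eq_mul_div, div_le_iff₀ hden]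
    nlinarith [norm_nonneg h, norm_nonneg z]
  have hloc := loc (t • h) (t • z) hth htz
  -- rewrite LHS
  have hE : (inner ℝ vk (t • h) : ℝ) - α*‖t • h‖ - ρ*‖T (t • h) - t • z‖
      = t * ((inner ℝ vk h : ℝ) - α*‖h‖ - ρ*‖T h - z‖) := by
    rw [real_inner_smul_right, norm_smul, Real.norm_eq_abs, abs_of_pos htpos]
    have : T (t • h) - t • z = t • (T h - z) := by rw [map_smul]; module
    rw [this, norm_smul, Real.norm_eq_abs, abs_of_pos htpos]; ring
  rw [hE] at hloc
  -- convexity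
  have hcv := hconv (y0 + z) y0 t (le_of_lt htpos) ht1
  have hpt : t • (y0 + z) + (1 - t) • y0 = y0 + t • z := by module
  rw [hpt, hϑz, hc] at hcv
  have hcoe : (t : EReal) * ((b:ℝ) : EReal) + ((1 - t : ℝ) : EReal) * ((c:ℝ) : EReal)
      = ((t * b + (1-t) * c : ℝ) : EReal) := by
    rw [← EReal.coe_mul, ← EReal.coe_mul, ← EReal.coe_add]
  rw [hcoe] at hcv
  have h1 : ((c + t * ((inner ℝ vk h : ℝ) - α*‖h‖ - ρ*‖T h - z‖) : ℝ) : EReal)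
      ≤ ((t * b + (1-t) * c : ℝ) : EReal) := le_trans hloc hcv
  rw [EReal.coe_le_coe_iff] at h1
  rw [hϑz, EReal.coe_le_coe_iff]
  nlinarith [h1]


set_option maxHeartbeats 2000000 in
lemma penal {n m : ℕ} (f : Euc n → Euc m) (ϑ : Euc m → EReal) (hbot : ∀ y, ϑ y ≠ ⊥)
    (xb : Euc n) (f' : Euc n →L[ℝ] Euc m)
    (ℓ κ : ℝ) (hl : 0 ≤ ℓ) (hκ : 0 ≤ κ)
    (r1 : ℝ) (hr1 : 0 < r1)
    (h1 : ∀ y ∈ ball (f xb) r1, ∀ y' ∈ ball (f xb) r1, ϑ y ≠ ⊤ → ϑ y' ≠ ⊤ →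
      ϑ y ≤ ϑ y' + ((ℓ * ‖y - y'‖ : ℝ) : EReal))
    (r2 : ℝ) (hr2 : 0 < r2)
    (h2 : ∀ u ∈ ball xb r2, infDist u (f ⁻¹' (edom ϑ)) ≤ κ * infDist (f u) (edom ϑ))
    (hbx : xb ∈ f ⁻¹' edom ϑ)
    (δ : ℝ) (hδ : 0 < δ) (r3 : ℝ) (hr3 : 0 < r3)
    (h3 : ∀ p ∈ ball xb r3, ∀ q ∈ ball xb r3, ‖f p - f q - f' (p - q)‖ ≤ δ * ‖p - q‖)
    (x0 : Euc n) (c : ℝ) (hc : ϑ (f x0) = (c : EReal))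
    (vk : Euc n) (ε0 : ℝ) (hε0 : 0 < ε0)
    (r4 : ℝ) (hr4 : 0 < r4)
    (h4 : ∀ u ∈ ball x0 r4, ((c + ((inner ℝ vk (u - x0) : ℝ) - ε0*‖u - x0‖) : ℝ) : EReal) ≤ ϑ (f u))
    (hx0 : dist x0 xb < min r2 r3 / 4) (hfx0 : dist (f x0) (f xb) < r1 / 4) :
    ∃ r > 0, ∀ h z, ‖h‖ ≤ r → ‖z‖ ≤ r →
      ((c + ((inner ℝ vk h : ℝ) - (ε0 + δ*(ℓ + κ*(‖vk‖ + ε0 + ℓ*(‖f'‖+δ))))*‖h‖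
        - (ℓ + κ*(‖vk‖ + ε0 + ℓ*(‖f'‖+δ)))*‖f' h - z‖) : ℝ) : EReal) ≤ ϑ (f x0 + z) := by
  set M : ℝ := ‖f'‖ + δ with hM
  have hnf' : 0 ≤ ‖f'‖ := norm_nonneg f'
  have hM0 : 0 < M := by rw [hM]; linarith
  set K : ℝ := κ * (M + 1) + 1 with hK
  have hK1 : 1 ≤ K := by
    rw [hK]; nlinarith only [mul_nonneg hκ (by linarith only [hM0] : (0:ℝ) ≤ M + 1)]
  set K0 : ℝ := ‖vk‖ + ε0 + ℓ*M with hK0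
  have hnvk : 0 ≤ ‖vk‖ := norm_nonneg vk
  have hK0pos : 0 < K0 := by rw [hK0]; nlinarith only [hnvk, hε0, mul_nonneg hl hM0.le]
  set ρ' : ℝ := ℓ + κ * K0 with hρ'
  have hρ'0 : 0 ≤ ρ' := by rw [hρ']; nlinarith only [hl, mul_nonneg hκ hK0pos.le]
  set r23 : ℝ := min r2 r3 with hr23
  have hr23pos : 0 < r23 := lt_min hr2 hr3
  set D : ℝ := 8 * (K + 2) * (M + 2) with hD
  have hDpos : 0 < D := by
    rw [hD]
    nlinarith only [mul_pos (by linarith only [hK1] : (0:ℝ) < K+2) (by linarith only [hM0] : (0:ℝ) < M+2)]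
  have hD8 : 8 ≤ D := by
    rw [hD]
    nlinarith only [mul_le_mul (by linarith only [hK1] : (3:ℝ) ≤ K+2) (by linarith only [hM0] : (2:ℝ) ≤ M+2) (by norm_num) (by linarith only [hK1])]
  have hKD : K + 1 < D := by
    rw [hD]
    have hp : (K+2)*2 ≤ (K+2)*(M+2) := mul_le_mul_of_nonneg_left (by linarith only [hM0] : (2:ℝ) ≤ M+2) (by linarith only [hK1] : (0:ℝ) ≤ K+2)
    nlinarith only [hp, hK1]
  have hMKD : 8 * (M * (K+1)) ≤ D := by rw [hD]; nlinarith only [hK1, hM0]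
  set r : ℝ := min r4 (min r23 r1) / D with hrdef
  have hrpos : 0 < r := div_pos (lt_min hr4 (lt_min hr23pos hr1)) hDpos
  clear_value M K K0 ρ' r23 D r
  refine ⟨r, hrpos, ?_⟩
  intro h z hh hz
  by_cases htop : ϑ (f x0 + z) = ⊤
  · rw [htop]; exact le_top
  set b := (ϑ (f x0 + z)).toReal with hbdef
  have hϑb : ϑ (f x0 + z) = (b : EReal) := (EReal.coe_toReal htop (hbot _)).symm
  set u : Euc n := x0 + h with hu
  set y : Euc m := f x0 + z with hy
  have hh0 : 0 ≤ ‖h‖ := norm_nonneg h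
  have hz0 : 0 ≤ ‖z‖ := norm_nonneg z
  -- size bookkeeping
  have hrD4 : r * D = min r4 (min r23 r1) := by
    rw [hrdef]; exact div_mul_cancel₀ _ (ne_of_gt hDpos)
  have hrr4 : r * D ≤ r4 := by rw [hrD4]; exact min_le_left _ _
  have hrr23 : r * D ≤ r23 := by rw [hrD4]; exact le_trans (min_le_right _ _) (min_le_left _ _)
  have hrr1 : r * D ≤ r1 := by rw [hrD4]; exact le_trans (min_le_right _ _) (min_le_right _ _)
  have hr8a : 8 * r ≤ r * D := by nlinarith only [hrpos.le, hD8]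
  have hr23_8 : r ≤ r23 / 8 := by linarith only [hr8a, hrr23]
  have hr1_8 : r ≤ r1 / 8 := by linarith only [hr8a, hrr1]
  have hxbd : ‖x0 - xb‖ < r23 / 4 := by rw [← dist_eq_norm]; exact hx0
  have hub : ‖u - xb‖ < r23 / 2 := by
    have heq : u - xb = h + (x0 - xb) := by rw [hu]; abel
    rw [heq]
    have := norm_add_le h (x0 - xb)
    linarith only [this, hh, hxbd, hr23_8, hr23pos]
  have hr23r3 : r23 ≤ r3 := by rw [hr23]; exact min_le_right _ _
  have hr23r2 : r23 ≤ r2 := by rw [hr23]; exact min_le_left _ _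
  have hu3 : u ∈ ball xb r3 := by
    rw [mem_ball, dist_eq_norm]; linarith only [hub, hr23r3, hr23pos]
  have hu2 : u ∈ ball xb r2 := by
    rw [mem_ball, dist_eq_norm]; linarith only [hub, hr23r2, hr23pos]
  have hx03 : x0 ∈ ball xb r3 := by
    rw [mem_ball, dist_eq_norm]; linarith only [hxbd, hr23r3, hr23pos]
  -- β estimate
  set β : ℝ := ‖f u - y‖ with hβ
  have hβ0 : 0 ≤ β := norm_nonneg _
  have humx0 : u - x0 = h := by rw [hu]; abel
  have hβle : β ≤ ‖f' h - z‖ + δ * ‖h‖ := by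
    have h3' := h3 u hu3 x0 hx03
    rw [humx0] at h3'
    have heq : f u - y = (f u - f x0 - f' h) + (f' h - z) := by rw [hy]; abel
    rw [hβ, heq]
    have := norm_add_le (f u - f x0 - f' h) (f' h - z)
    linarith only [this, h3']
  have hfhz : ‖f' h - z‖ ≤ ‖f'‖ * ‖h‖ + ‖z‖ := by
    have h5 := norm_sub_le (f' h) z
    have h6 := f'.le_opNorm h
    linarith only [h5, h6]
  have hβbig : β ≤ (M + 1) * r := by
    have h5 : ‖f'‖ * ‖h‖ ≤ ‖f'‖ * r := mul_le_mul_of_nonneg_left hh hnf'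
    have h6 : δ * ‖h‖ ≤ δ * r := mul_le_mul_of_nonneg_left hh hδ.le
    have : (M+1)*r = ‖f'‖*r + δ*r + r := by rw [hM]; ring
    linarith only [this, hβle, hfhz, h5, h6, hz]
  -- main inequality with slack η
  have main : ∀ η : ℝ, 0 < η → η ≤ r →
      c + ((inner ℝ vk h : ℝ) - (ε0 + δ*ρ')*‖h‖ - ρ'*‖f' h - z‖) ≤ b + K0 * η := by
    intro η hη hηr
    have hPne : (f ⁻¹' edom ϑ).Nonempty := ⟨xb, hbx⟩
    have hinf1 : infDist (f u) (edom ϑ) ≤ β := by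
      have hyD : y ∈ edom ϑ := htop
      calc infDist (f u) (edom ϑ) ≤ dist (f u) y := infDist_le_dist_of_mem hyD
      _ = β := by rw [dist_eq_norm]
    have hinf2 : infDist u (f ⁻¹' edom ϑ) < κ * β + η := by
      have h5 := h2 u hu2
      have h6 : κ * infDist (f u) (edom ϑ) ≤ κ * β :=
        mul_le_mul_of_nonneg_left hinf1 hκ
      linarith only [h5, h6, hη]
    obtain ⟨u', hu'P, hu'd⟩ := (infDist_lt_iff hPne).mp hinf2
    rw [dist_eq_norm] at hu'd
    set A : ℝ := ‖u - u'‖ with hA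
    have hA0 : 0 ≤ A := norm_nonneg _
    have hAle : A ≤ κ * β + η := le_of_lt hu'd
    have hAbound : A ≤ K * r := by
      have h5 : κ * β ≤ κ * ((M+1)*r) := mul_le_mul_of_nonneg_left hβbig hκ
      have h6 : K * r = κ * ((M+1)*r) + r := by rw [hK]; ring
      linarith only [hAle, h5, h6, hηr]
    have hu'ueq : ‖u' - u‖ = A := by rw [hA, norm_sub_rev]
    have hu'x0 : ‖u' - x0‖ ≤ ‖h‖ + A := by
      have heq : u' - x0 = h + (u' - u) := by rw [hu]; abel
      rw [heq]
      have := norm_add_le h (u' - u)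
      rw [hu'ueq] at this; linarith only [this]
    have hu'x0r : ‖u' - x0‖ ≤ (K + 1) * r := by
      have : (K+1)*r = K*r + r := by ring
      linarith only [this, hu'x0, hAbound, hh]
    have hu'ball4 : u' ∈ ball x0 r4 := by
      rw [mem_ball, dist_eq_norm]
      have h5 : (K+1) * r < D * r := mul_lt_mul_of_pos_right hKD hrpos
      have h6 : D * r ≤ r4 := by rw [mul_comm]; exact hrr4
      linarith only [h5, h6, hu'x0r]
    have hKD8 : 8 * (K+1) ≤ D := by
      rw [hD]
      have hp : (K+1)*2 ≤ (K+2)*(M+2) :=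
        mul_le_mul (by linarith only [] : K+1 ≤ K+2) (by linarith only [hM0] : (2:ℝ) ≤ M+2)
          (by norm_num) (by linarith only [hK1])
      nlinarith only [hp, mul_nonneg (show (0:ℝ) ≤ K+2 by linarith only [hK1])
        (show (0:ℝ) ≤ M+2 by linarith only [hM0])]
    have hKr8 : (K+1) * r ≤ r23 / 8 := by
      have h5 : 8 * (K+1) * r ≤ D * r := mul_le_mul_of_nonneg_right hKD8 hrpos.le
      have h6 : D * r ≤ r23 := by rw [mul_comm]; exact hrr23
      linarith only [h5, h6]
    have hu'3 : u' ∈ ball xb r3 := by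
      rw [mem_ball, dist_eq_norm]
      have heq : u' - xb = (u' - x0) + (x0 - xb) := by abel
      rw [heq]
      have := norm_add_le (u' - x0) (x0 - xb)
      linarith only [this, hu'x0r, hKr8, hxbd, hr23r3, hr23pos]
    have hfu'u : ‖f u' - f u‖ ≤ M * A := by
      have h5 := h3 u' hu'3 u hu3
      rw [hu'ueq] at h5
      have h7 : ‖f' (u' - u)‖ ≤ ‖f'‖ * ‖u' - u‖ := f'.le_opNorm _
      rw [hu'ueq] at h7
      have heq : f u' - f u = (f u' - f u - f' (u' - u)) + f' (u' - u) := by abel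
      have h8 := norm_add_le (f u' - f u - f' (u' - u)) (f' (u' - u))
      rw [← heq] at h8
      have : M * A = ‖f'‖ * A + δ * A := by rw [hM]; ring
      linarith only [this, h5, h7, h8]
    have hfux0 : ‖f u - f x0‖ ≤ M * ‖h‖ := by
      have h5 := h3 u hu3 x0 hx03
      rw [humx0] at h5
      have h7 : ‖f' h‖ ≤ ‖f'‖ * ‖h‖ := f'.le_opNorm _
      have heq : f u - f x0 = (f u - f x0 - f' h) + f' h := by abel
      have h8 := norm_add_le (f u - f x0 - f' h) (f' h)
      rw [← heq] at h8
      have : M * ‖h‖ = ‖f'‖ * ‖h‖ + δ * ‖h‖ := by rw [hM]; ring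
      linarith only [this, h5, h7, h8]
    have hfxbd : ‖f x0 - f xb‖ < r1/4 := by rw [← dist_eq_norm]; exact hfx0
    have hyball : y ∈ ball (f xb) r1 := by
      rw [mem_ball, dist_eq_norm]
      have heq : y - f xb = z + (f x0 - f xb) := by rw [hy]; abel
      rw [heq]
      have := norm_add_le z (f x0 - f xb)
      linarith only [this, hfxbd, hz, hr1_8, hr1]
    have hfu'ball : f u' ∈ ball (f xb) r1 := by
      rw [mem_ball, dist_eq_norm]
      have heq : f u' - f xb = (f u' - f u) + (f u - f x0) + (f x0 - f xb) := by abel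
      rw [heq]
      have h5 := norm_add_le ((f u' - f u) + (f u - f x0)) (f x0 - f xb)
      have h5' := norm_add_le (f u' - f u) (f u - f x0)
      have h7 : M * A ≤ M * (K * r) := mul_le_mul_of_nonneg_left hAbound hM0.le
      have h8 : M * ‖h‖ ≤ M * r := mul_le_mul_of_nonneg_left hh hM0.le
      have h10 : M * (K*r) + M * r ≤ r1 / 8 := by
        have h11 : 8 * (M * (K+1)) * r ≤ D * r := mul_le_mul_of_nonneg_right hMKD hrpos.le
        have h12 : D * r ≤ r1 := by rw [mul_comm]; exact hrr1
        nlinarith only [h11, h12]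
      linarith only [h5, h5', h7, h8, h10, hfxbd, hfu'u, hfux0, hr1]
    have hfu'fin : ϑ (f u') ≠ ⊤ := hu'P
    set c' := (ϑ (f u')).toReal with hc'
    have hϑc' : ϑ (f u') = (c' : EReal) := (EReal.coe_toReal hfu'fin (hbot _)).symm
    have hlip := h1 (f u') hfu'ball y hyball hfu'fin htop
    rw [hϑc', hy, hϑb, ← EReal.coe_add, EReal.coe_le_coe_iff] at hlip
    have hfre := h4 u' hu'ball4
    rw [hϑc', EReal.coe_le_coe_iff] at hfre
    have hinner : (inner ℝ vk h : ℝ) - ‖vk‖ * A ≤ (inner ℝ vk (u' - x0) : ℝ) := by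
      have heq : u' - x0 = h + (u' - u) := by rw [hu]; abel
      rw [heq, inner_add_right]
      have hCS : |(inner ℝ vk (u' - u) : ℝ)| ≤ ‖vk‖ * ‖u' - u‖ := abs_real_inner_le_norm _ _
      rw [hu'ueq] at hCS
      have := (abs_le.mp hCS).1
      linarith only [this]
    have hfy : ‖f u' - y‖ ≤ M * A + β := by
      have heq : f u' - y = (f u' - f u) + (f u - y) := by abel
      rw [heq]
      have := norm_add_le (f u' - f u) (f u - y)
      rw [← hβ] at this
      linarith only [this, hfu'u]
    -- combine
    have hstep1 : c' ≤ b + ℓ * (M * A) + ℓ * β := by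
      have h5 : ℓ * ‖f u' - y‖ ≤ ℓ * (M * A + β) := mul_le_mul_of_nonneg_left hfy hl
      have h6 : ℓ * (M * A + β) = ℓ * (M * A) + ℓ * β := by ring
      linarith only [h5, h6, hlip, hfy]
    have hstep2 : c + ((inner ℝ vk h : ℝ) - ‖vk‖ * A - ε0 * ‖h‖ - ε0 * A) ≤ c' := by
      have h5 : ε0 * ‖u' - x0‖ ≤ ε0 * (‖h‖ + A) := mul_le_mul_of_nonneg_left hu'x0 hε0.le
      have h6 : ε0 * (‖h‖ + A) = ε0 * ‖h‖ + ε0 * A := by ring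
      linarith only [h5, h6, hfre, hinner]
    have hexp2 : K0 * A = ‖vk‖ * A + ε0 * A + ℓ * (M * A) := by rw [hK0]; ring
    have hstep3 : c + ((inner ℝ vk h : ℝ) - ε0*‖h‖ - K0 * A - ℓ * β) ≤ b := by
      linarith only [hstep1, hstep2, hexp2]
    have hstep4 : K0 * A ≤ K0 * κ * β + K0 * η := by
      have h5 : K0 * A ≤ K0 * (κ * β + η) := mul_le_mul_of_nonneg_left hAle hK0pos.le
      linarith only [h5, (by ring : K0 * (κ * β + η) = K0 * κ * β + K0 * η)]
    have hstep5 : ρ' * β ≤ ρ' * ‖f' h - z‖ + ρ' * δ * ‖h‖ := by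
      have h5 : ρ' * β ≤ ρ' * (‖f' h - z‖ + δ * ‖h‖) := mul_le_mul_of_nonneg_left hβle hρ'0
      linarith only [h5, (by ring : ρ' * (‖f' h - z‖ + δ * ‖h‖) = ρ' * ‖f' h - z‖ + ρ' * δ * ‖h‖)]
    have hexp5 : ℓ * β + K0 * κ * β = ρ' * β := by rw [hρ']; ring
    have hexp6 : (ε0 + δ*ρ')*‖h‖ = ε0*‖h‖ + ρ' * δ * ‖h‖ := by ring
    linarith only [hstep3, hstep4, hstep5, hexp5, hexp6]
  -- eliminate η
  rw [hϑb, EReal.coe_le_coe_iff]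
  have hfin : ∀ ε' : ℝ, 0 < ε' →
      c + ((inner ℝ vk h : ℝ) - (ε0 + δ*ρ')*‖h‖ - ρ'*‖f' h - z‖) ≤ b + ε' := by
    intro ε' hε'
    have hηpos : 0 < min (ε'/K0) r := lt_min (div_pos hε' hK0pos) hrpos
    have h5 := main (min (ε'/K0) r) hηpos (min_le_right _ _)
    have h6 : K0 * min (ε'/K0) r ≤ K0 * (ε'/K0) :=
      mul_le_mul_of_nonneg_left (min_le_left _ _) hK0pos.le
    rw [mul_div_cancel₀ _ (ne_of_gt hK0pos)] at h6
    linarith only [h5, h6]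
  exact le_of_forall_pos_le_add hfin

end AuxLemmas

/-- bounded multipliers under metric subregularity. -/
theorem stmt12 {n m : ℕ} (f : Euc n → Euc m) (ϑ : Euc m → EReal) (xb : Euc n)
    (f' : Euc n →L[ℝ] Euc m) (hf : HasStrictFDerivAt f f' xb)
    (hbot : ∀ y, ϑ y ≠ ⊥) (hconv : ERealConvexOn ϑ) (hfin : ϑ (f xb) ≠ ⊤)
    (hlsc : ∃ U ∈ 𝓝 (f xb), ∀ y ∈ U, LowerSemicontinuousAt ϑ y)
    (ℓ : ℝ) (hl : 0 ≤ ℓ) (hlip : LipRelDom ϑ (f xb) ℓ)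
    (κ : ℝ) (hmsqc : MSQCAt f (edom ϑ) xb κ) :
    ∀ v ∈ limSubdiff (fun x => ϑ (f x)) xb,
      ∃ lam ∈ limSubdiff ϑ (f xb),
        v = ContinuousLinearMap.adjoint f' lam ∧
        ‖lam‖ ≤ ℓ + κ * ‖v‖ + κ * ℓ * ‖f'‖ := by
  intro v hv
  obtain ⟨xk, vks, hxk, hψk, hvk, hfk⟩ := hv
  -- basic facts
  have hκ0 : 0 ≤ κ := hmsqc.1
  set cb := (ϑ (f xb)).toReal with hcb
  have hϑcb : ϑ (f xb) = (cb : EReal) := (EReal.coe_toReal hfin (hbot _)).symm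
  have hcont : ContinuousAt f xb := hf.continuousAt
  have hfx : Tendsto (fun k => f (xk k)) atTop (𝓝 (f xb)) := Filter.Tendsto.comp hcont hxk
  -- neighborhood data
  obtain ⟨U, hU, hUlip⟩ := hlip
  obtain ⟨r1, hr1pos, hball1⟩ := Metric.mem_nhds_iff.mp hU
  have h1 : ∀ y ∈ ball (f xb) r1, ∀ y' ∈ ball (f xb) r1, ϑ y ≠ ⊤ → ϑ y' ≠ ⊤ →
      ϑ y ≤ ϑ y' + ((ℓ * ‖y - y'‖ : ℝ) : EReal) :=
    fun y hy y' hy' h h' => hUlip y (hball1 hy) y' (hball1 hy') h h'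
  obtain ⟨r2, hr2pos, h2⟩ := Metric.eventually_nhds_iff_ball.mp hmsqc.2
  have hstrict : ∀ δ : ℝ, 0 < δ → ∃ r3 > 0, ∀ p ∈ ball xb r3, ∀ q ∈ ball xb r3,
      ‖f p - f q - f' (p - q)‖ ≤ δ * ‖p - q‖ := by
    intro δ hδ
    have h := hf.isLittleO.def hδ
    rw [Metric.eventually_nhds_iff_ball] at h
    obtain ⟨r3, hr3, hb⟩ := h
    refine ⟨r3, hr3, fun p hp q hq => ?_⟩
    exact hb (p, q) (by rw [mem_ball, Prod.dist_eq]; exact max_lt hp hq)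
  have hbx : xb ∈ f ⁻¹' edom ϑ := hfin
  -- eventual finiteness
  have hevfin : ∀ᶠ k in atTop, ϑ (f (xk k)) < ⊤ := by
    have hlt : ϑ (f xb) ∈ Iio (⊤ : EReal) := lt_top_iff_ne_top.mpr hfin
    exact hψk.eventually (isOpen_Iio.eventually_mem hlt)
  set ρb : ℝ := ℓ + κ * (‖v‖ + ℓ * ‖f'‖) with hρb
  have hρb0 : 0 ≤ ρb := by
    have h1 := norm_nonneg v; have h2 := norm_nonneg f'
    have h3 : 0 ≤ κ * (‖v‖ + ℓ * ‖f'‖) :=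
      mul_nonneg hκ0 (add_nonneg h1 (mul_nonneg hl h2))
    rw [hρb]; linarith only [hl, h3]
  clear_value ρb
  -- MAIN CLAIM
  have claim : ∀ ε : ℝ, 0 < ε → ∀ᶠ k in atTop, ∃ lam : Euc m,
      (∀ z, ϑ (f (xk k)) + ((inner ℝ lam z : ℝ) : EReal) ≤ ϑ (f (xk k) + z)) ∧
      ‖lam‖ ≤ ρb + ε ∧ ‖vks k - ContinuousLinearMap.adjoint f' lam‖ ≤ ε := by
    intro ε hε
    set c2 : ℝ := 4 * (κ + 1) * (ℓ + 2) with hc2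
    have hc2pos : 0 < c2 := by rw [hc2]; nlinarith only [hl, hκ0]
    set ε0 : ℝ := ε / c2 with hε0def
    have hε0 : 0 < ε0 := div_pos hε hc2pos
    set δ : ℝ := min ε0 (ε / (2 * (ρb + ε + 1))) with hδdef
    have hδ : 0 < δ := lt_min hε0 (div_pos hε (by nlinarith only [hρb0, hε]))
    have hδε0' : δ ≤ ε0 := min_le_left _ _
    have hδ2' : δ ≤ ε / (2 * (ρb + ε + 1)) := min_le_right _ _
    clear_value c2 ε0 δ
    obtain ⟨r3, hr3pos, h3⟩ := hstrict δ hδ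
    -- eventual conditions
    have hek1 : ∀ᶠ k in atTop, dist (xk k) xb < min r2 r3 / 4 :=
      (Metric.tendsto_nhds.mp hxk) _ (by positivity)
    have hek2 : ∀ᶠ k in atTop, dist (f (xk k)) (f xb) < r1 / 4 :=
      (Metric.tendsto_nhds.mp hfx) _ (by positivity)
    have hek4 : ∀ᶠ k in atTop, ‖vks k‖ < ‖v‖ + ε0 := by
      have hn : Tendsto (fun k => ‖vks k‖) atTop (𝓝 ‖v‖) := hvk.norm
      have := (Metric.tendsto_nhds.mp hn) ε0 hε0
      filter_upwards [this] with k hk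
      rw [Real.dist_eq] at hk
      have := (abs_lt.mp hk).2
      linarith
    filter_upwards [hek1, hek2, hevfin, hek4] with k hk1 hk2 hk3 hk4
    set x0 := xk k with hx0def
    set c : ℝ := (ϑ (f x0)).toReal with hcdef
    have hc : ϑ (f x0) = (c : EReal) := (EReal.coe_toReal hk3.ne (hbot _)).symm
    -- Fréchet subgradient ball
    have hfre := hfk k ε0 hε0
    rw [Metric.eventually_nhds_iff_ball] at hfre
    obtain ⟨r4, hr4pos, h4'⟩ := hfre
    have h4 : ∀ u ∈ ball x0 r4,
        ((c + ((inner ℝ (vks k) (u - x0) : ℝ) - ε0 * ‖u - x0‖) : ℝ) : EReal) ≤ ϑ (f u) := by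
      intro u hu
      have := h4' u hu
      simp only at this
      rw [hc] at this
      calc ((c + ((inner ℝ (vks k) (u - x0) : ℝ) - ε0 * ‖u - x0‖) : ℝ) : EReal)
          = ((c : ℝ) : EReal) + (((inner ℝ (vks k) (u - x0) : ℝ) - ε0 * ‖u - x0‖ : ℝ) : EReal) := by
            rw [← EReal.coe_add]
      _ ≤ ϑ (f u) := this
    -- penalization
    obtain ⟨r, hrpos, loc⟩ := penal f ϑ hbot xb f' ℓ κ hl hκ0 r1 hr1pos h1 r2 hr2pos h2 hbx
      δ hδ r3 hr3pos h3 x0 c hc (vks k) ε0 hε0 r4 hr4pos h4 hk1 hk2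
    set ρ' : ℝ := ℓ + κ * (‖vks k‖ + ε0 + ℓ * (‖f'‖ + δ)) with hρ'def
    have hρ'0 : 0 ≤ ρ' := by
      have h1 := norm_nonneg (vks k); have h2 := norm_nonneg f'
      have h3 : 0 ≤ κ * (‖vks k‖ + ε0 + ℓ * (‖f'‖ + δ)) :=
        mul_nonneg hκ0 (add_nonneg (add_nonneg h1 hε0.le) (mul_nonneg hl (by linarith only [h2, hδ.le])))
      rw [hρ'def]; linarith only [hl, h3]
    clear_value ρ'
    have hα0 : 0 ≤ ε0 + δ * ρ' := by nlinarith only [hε0, hδ, hρ'0]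
    have key := localToGlobal ϑ hconv hbot (f x0) c hc f' (vks k) (ε0 + δ * ρ') ρ' r hrpos loc
    obtain ⟨lam, hlam1, hlam2, hlam3⟩ := duality ϑ hconv hbot (f x0) c hc f' (vks k)
      (ε0 + δ * ρ') ρ' hα0 hρ'0 key
    -- numeric bounds, done once
    have hc2e : ε0 * c2 = ε := by
      rw [hε0def]; field_simp
    have hA : κ * (2 + ℓ) ≤ (κ + 1) * (ℓ + 2) := by nlinarith only [hl, hκ0]
    have hkey : κ * (2 + ℓ) * ε0 ≤ ε / 4 := by
      have hB : κ * (2 + ℓ) * ε0 ≤ (κ + 1) * (ℓ + 2) * ε0 :=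
        mul_le_mul_of_nonneg_right hA hε0.le
      have hC : (κ + 1) * (ℓ + 2) * ε0 = ε0 * c2 / 4 := by rw [hc2]; ring
      linarith only [hB, hC, hc2e]
    have hε04 : ε0 ≤ ε / 4 := by
      have hc24 : 4 ≤ c2 := by
        rw [hc2]; nlinarith only [hl, hκ0, mul_nonneg hκ0 hl]
      nlinarith only [hc2e, hε0.le, hc24]
    have hρ'le : ρ' ≤ ρb + ε := by
      have hδε0 : δ ≤ ε0 := hδε0'
      have hnv : ‖vks k‖ ≤ ‖v‖ + ε0 := hk4.le
      have hf'0 : 0 ≤ ‖f'‖ := norm_nonneg f'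
      have hv0 : 0 ≤ ‖v‖ := norm_nonneg v
      have h7 : ‖vks k‖ + ε0 + ℓ * (‖f'‖ + δ) ≤ (‖v‖ + ℓ * ‖f'‖) + (2 + ℓ) * ε0 := by
        have hld : ℓ * δ ≤ ℓ * ε0 := mul_le_mul_of_nonneg_left hδε0 hl
        have he1 : ℓ * (‖f'‖ + δ) = ℓ * ‖f'‖ + ℓ * δ := by ring
        have he2 : (2 + ℓ) * ε0 = 2 * ε0 + ℓ * ε0 := by ring
        linarith only [hld, he1, he2, hnv, hε0]
      have h8 : κ * (‖vks k‖ + ε0 + ℓ * (‖f'‖ + δ))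
          ≤ κ * ((‖v‖ + ℓ * ‖f'‖) + (2 + ℓ) * ε0) := mul_le_mul_of_nonneg_left h7 hκ0
      have h9 : κ * ((‖v‖ + ℓ * ‖f'‖) + (2 + ℓ) * ε0)
          = κ * (‖v‖ + ℓ * ‖f'‖) + κ * (2 + ℓ) * ε0 := by ring
      rw [hρ'def, hρb]
      linarith only [h8, h9, hkey, hε]
    refine ⟨lam, ?_, ?_, ?_⟩
    · intro z
      have := hlam3 z
      rw [EReal.coe_add] at this
      rwa [hc]
    · -- ‖lam‖ ≤ ρb + ε
      linarith only [hlam1, hρ'le]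
    · -- ‖vks k - adjoint‖ ≤ ε
      have hδ2 : δ ≤ ε / (2 * (ρb + ε + 1)) := hδ2'
      have hδρ : δ * ρ' ≤ ε / 2 := by
        have h8 : δ * ρ' ≤ δ * (ρb + ε + 1) := by
          apply mul_le_mul_of_nonneg_left _ hδ.le
          linarith only [hρ'le]
        have h9 : δ * (ρb + ε + 1) ≤ (ε / (2 * (ρb + ε + 1))) * (ρb + ε + 1) := by
          apply mul_le_mul_of_nonneg_right hδ2
          linarith only [hρb0, hε]
        rw [div_mul_eq_mul_div, mul_comm (2:ℝ) (ρb + ε + 1), ← div_div,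
          mul_div_assoc, div_self (by linarith only [hρb0, hε] : ρb + ε + 1 ≠ 0), mul_one] at h9
        linarith only [h8, h9]
      linarith only [hlam2, hδρ, hε04, hε.le]
  -- extract diagonal sequence
  have claim' : ∀ j : ℕ, ∃ kj : ℕ, kj ≥ j ∧ ∃ lam : Euc m,
      (∀ z, ϑ (f (xk kj)) + ((inner ℝ lam z : ℝ) : EReal) ≤ ϑ (f (xk kj) + z)) ∧
      ‖lam‖ ≤ ρb + 1/(j+1) ∧ ‖vks kj - ContinuousLinearMap.adjoint f' lam‖ ≤ 1/(j+1) := by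
    intro j
    have h := claim (1/(j+1)) (by positivity)
    obtain ⟨N, hN⟩ := eventually_atTop.mp h
    obtain ⟨lam, hlam⟩ := hN (max N j) (le_max_left _ _)
    exact ⟨max N j, le_max_right _ _, lam, hlam⟩
  choose kk hkk lams hsub hbnd hdist using claim'
  -- Bolzano–Weierstrass
  have hmem : ∀ j, lams j ∈ closedBall (0 : Euc m) (ρb + 1) := by
    intro j
    rw [mem_closedBall, dist_zero_right]
    have h5 : (1:ℝ)/(j+1) ≤ 1 := by
      rw [div_le_one (by positivity)]
      have : (0:ℝ) ≤ j := Nat.cast_nonneg j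
      linarith
    linarith [hbnd j]
  obtain ⟨a, -, φ, hφ, haconv⟩ :=
    tendsto_subseq_of_bounded Metric.isBounded_closedBall hmem
  have hkkt : Tendsto kk atTop atTop := tendsto_atTop_mono hkk tendsto_id
  have hkkφ : Tendsto (fun i => kk (φ i)) atTop atTop := hkkt.comp hφ.tendsto_atTop
  have hone : Tendsto (fun i : ℕ => (1:ℝ)/(φ i + 1)) atTop (𝓝 0) := by
    have h5 : ∀ i : ℕ, (1:ℝ)/(φ i + 1) ≤ 1/(i+1) := by
      intro i
      apply one_div_le_one_div_of_le (by positivity)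
      have := hφ.le_apply (x := i)
      have : (i:ℝ) ≤ (φ i : ℝ) := by exact_mod_cast this
      linarith
    have h6 : ∀ i : ℕ, (0:ℝ) ≤ 1/(φ i + 1) := fun i => by positivity
    exact squeeze_zero h6 h5 tendsto_one_div_add_atTop_nhds_zero_nat
  refine ⟨a, ?_, ?_, ?_⟩
  · -- a ∈ limSubdiff ϑ (f xb)
    refine ⟨fun i => f (xk (kk (φ i))), fun i => lams (φ i), ?_, ?_, haconv, ?_⟩
    · exact hfx.comp hkkφ
    · exact hψk.comp hkkφ
    · intro i
      intro ε' hε'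
      refine Filter.Eventually.of_forall (fun y => ?_)
      have h5 := hsub (φ i) (y - f (xk (kk (φ i))))
      rw [add_sub_cancel] at h5
      refine le_trans ?_ h5
      refine add_le_add le_rfl ?_
      rw [EReal.coe_le_coe_iff]
      have h6 : 0 ≤ ε' * ‖y - f (xk (kk (φ i)))‖ := by positivity
      linarith
  · -- v = adjoint f' a
    have hs : Tendsto (fun i => vks (kk (φ i)) - ContinuousLinearMap.adjoint f' (lams (φ i)))
        atTop (𝓝 (v - ContinuousLinearMap.adjoint f' a)) := by
      apply Tendsto.sub
      · exact hvk.comp hkkφ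
      · exact ((ContinuousLinearMap.adjoint f').continuous.tendsto a).comp haconv
    have hnorm : Tendsto (fun i => ‖vks (kk (φ i)) - ContinuousLinearMap.adjoint f' (lams (φ i))‖)
        atTop (𝓝 ‖v - ContinuousLinearMap.adjoint f' a‖) := hs.norm
    have hle : ‖v - ContinuousLinearMap.adjoint f' a‖ ≤ 0 := by
      apply le_of_tendsto_of_tendsto' hnorm hone
      intro i
      exact hdist (φ i)
    have h0 : v - ContinuousLinearMap.adjoint f' a = 0 := norm_le_zero_iff.mp hle
    exact sub_eq_zero.mp h0
  · -- norm bound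
    have hnorm : Tendsto (fun i => ‖lams (φ i)‖) atTop (𝓝 ‖a‖) := haconv.norm
    have hbd : Tendsto (fun i : ℕ => ρb + 1/(φ i + 1)) atTop (𝓝 (ρb + 0)) :=
      (tendsto_const_nhds).add hone
    have hle : ‖a‖ ≤ ρb + 0 := by
      apply le_of_tendsto_of_tendsto' hnorm hbd
      intro i
      exact hbnd (φ i)
    rw [hρb] at hle
    have hrw : ℓ + κ * (‖v‖ + ℓ * ‖f'‖) = ℓ + κ * ‖v‖ + κ * ℓ * ‖f'‖ := by ring
    linarith [hle]
end
end

section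
/- Let ϑ: ℝᵐ → ℝ ∪ {∞} be convex piecewise linear-quadratic with representation ϑ(y) = ½⟨A_i y, y⟩ + ⟨a_i, y⟩ + α_i on Ω_i, dom ϑ = ⋃ Ω_i. For any ȳ ∈ dom ϑ, w ∈ dom dϑ(ȳ), and z ∈ T²_{dom ϑ}(ȳ, w), the parabolic subderivative along the straight parabola exists as a full limit: d²ϑ(ȳ)(w; z) = lim_{t↓0} [ϑ(ȳ + tw + ½t²z) − ϑ(ȳ) − t dϑ(ȳ)(w)]/(½t²), and equals ⟨A_{i₀}ȳ + a_{i₀}, z⟩ + ⟨w, A_{i₀}w⟩ for a suitable index i₀ with z ∈ T²_{Ω_{i₀}}(ȳ,w). -/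
open Filter Topology Metric Set

noncomputable section

section myHelpers

lemma myPigeon {ι : Type*} [Finite ι] {P : ι → ℕ → Prop} (h : ∀ᶠ k in atTop, ∃ i, P i k) :
    ∃ i, ∃ φ : ℕ → ℕ, StrictMono φ ∧ ∀ n, P i (φ n) := by
  have hfr : ∃ i, ∃ᶠ k in atTop, P i k := by
    by_contra hc
    push_neg at hc
    obtain ⟨k, hk1, hk2⟩ := ((eventually_all.2 hc).and h).exists
    obtain ⟨i, hi⟩ := hk2
    exact hk1 i hi
  obtain ⟨i, hi⟩ := hfr
  obtain ⟨φ, hφ, hm⟩ := extraction_of_frequently_atTop hi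
  exact ⟨i, φ, hφ, hm⟩

lemma myLiminfEq {α : Type*} (F : Filter α) (f : α → EReal) (c : ℝ)
    (hlow : ∀ b : EReal, b < (c:EReal) → ∀ᶠ x in F, b < f x)
    (hup : ∀ b : EReal, (c:EReal) < b → ∃ᶠ x in F, f x < b) :
    Filter.liminf f F = (c : EReal) := by
  refine le_antisymm (le_of_forall_gt_imp_ge_of_dense fun b hb => ?_) ((Filter.le_liminf_iff).2 hlow)
  exact Filter.liminf_le_of_frequently_le' ((hup b hb).mono fun x h => h.le)

lemma myPolyTendsto (a b c : ℝ) :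
    Tendsto (fun τ : ℝ => a + b*τ + c*τ^2) (𝓝[>](0:ℝ)) (𝓝 a) := by
  have hc : Tendsto (fun τ : ℝ => a + b*τ + c*τ^2) (𝓝 (0:ℝ)) (𝓝 (a + b*0 + c*0^2)) :=
    Continuous.tendsto (by continuity) 0
  simpa using hc.mono_left nhdsWithin_le_nhds

lemma myVanish {a b c d : ℝ} (h : ∀ᶠ τ in 𝓝[>](0:ℝ), a + b*τ + c*τ^2 + d*τ^3 = 0) : a = 0 := by
  have hp : Tendsto (fun τ : ℝ => a + b*τ + c*τ^2 + d*τ^3) (𝓝[>](0:ℝ)) (𝓝 a) := by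
    have hc : Tendsto (fun τ : ℝ => a + b*τ + c*τ^2 + d*τ^3) (𝓝 (0:ℝ))
        (𝓝 (a + b*0 + c*0^2 + d*0^3)) := Continuous.tendsto (by continuity) 0
    simpa using hc.mono_left nhdsWithin_le_nhds
  have h0 : Tendsto (fun τ : ℝ => a + b*τ + c*τ^2 + d*τ^3) (𝓝[>](0:ℝ)) (𝓝 0) :=
    Tendsto.congr' (by filter_upwards [h] with τ hτ; exact hτ.symm) tendsto_const_nhds
  exact tendsto_nhds_unique hp h0

lemma myVanish4 {b c d e : ℝ} (h : ∀ᶠ τ in 𝓝[>](0:ℝ), b*τ + c*τ^2 + d*τ^3 + e*τ^4 = 0) :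
    b = 0 ∧ c = 0 := by
  have ht : ∀ᶠ τ in 𝓝[>](0:ℝ), (0:ℝ) < τ := self_mem_nhdsWithin
  have h1 : ∀ᶠ τ in 𝓝[>](0:ℝ), b + c*τ + d*τ^2 + e*τ^3 = 0 := by
    filter_upwards [h, ht] with τ hτ h0
    have he : τ * (b + c*τ + d*τ^2 + e*τ^3) = b*τ + c*τ^2 + d*τ^3 + e*τ^4 := by ring
    have : τ * (b + c*τ + d*τ^2 + e*τ^3) = 0 := by rw [he, hτ]
    exact (mul_eq_zero.mp this).resolve_left h0.ne'
  have hb : b = 0 := myVanish h1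
  refine ⟨hb, ?_⟩
  have h2 : ∀ᶠ τ in 𝓝[>](0:ℝ), c + d*τ + e*τ^2 + 0*τ^3 = 0 := by
    filter_upwards [h1, ht] with τ hτ h0
    rw [hb] at hτ
    have he : τ * (c + d*τ + e*τ^2 + 0*τ^3) = 0 + c*τ + d*τ^2 + e*τ^3 := by ring
    have : τ * (c + d*τ + e*τ^2 + 0*τ^3) = 0 := by rw [he, hτ]
    exact (mul_eq_zero.mp this).resolve_left h0.ne'
  exact myVanish h2

variable {E : Type*} [NormedAddCommGroup E] [InnerProductSpace ℝ E]

lemma myQexpand (A : E →L[ℝ] E) (a0 : E) (α : ℝ)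
    (hs : ∀ u v : E, (inner ℝ (A u) v : ℝ) = (inner ℝ u (A v) : ℝ))
    (x w' z' : E) (τ : ℝ) :
    1/2 * (inner ℝ (A (x + τ • w' + (τ^2/2) • z')) (x + τ • w' + (τ^2/2) • z') : ℝ)
      + (inner ℝ a0 (x + τ • w' + (τ^2/2) • z') : ℝ) + α
    = (1/2 * (inner ℝ (A x) x : ℝ) + (inner ℝ a0 x : ℝ) + α)
      + τ * (inner ℝ (A x + a0) w' : ℝ)
      + τ^2/2 * ((inner ℝ (A x + a0) z' : ℝ) + (inner ℝ (A w') w' : ℝ))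
      + τ^3/4 * ((inner ℝ (A w') z' : ℝ) + (inner ℝ (A z') w' : ℝ))
      + τ^4/8 * (inner ℝ (A z') z' : ℝ) := by
  have hsym : ∀ u v : E, (inner ℝ (A u) v : ℝ) = (inner ℝ (A v) u : ℝ) := by
    intro u v; rw [hs, real_inner_comm]
  simp only [map_add, map_smul, inner_add_left, inner_add_right, real_inner_smul_left,
    real_inner_smul_right, smul_eq_mul]
  rw [hsym x w', hsym x z', hsym w' z']
  ring

lemma myPolyLim {Ω : Set E} (hΩ : IsPolyhedral Ω) {y : ℕ → E} {x : E}
    (hy : Tendsto y atTop (𝓝 x)) (hmem : ∀ k, y k ∈ Ω) : x ∈ Ω := by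
  obtain ⟨k, c, b, rfl⟩ := hΩ
  intro j
  exact le_of_tendsto ((tendsto_const_nhds.inner hy)) (Eventually.of_forall fun n => hmem n j)

lemma myPolyTan {Ω : Set E} (hΩ : IsPolyhedral Ω) {x w : E} {t : ℕ → ℝ} {wk : ℕ → E}
    (ht : ∀ k, 0 < t k) (ht0 : Tendsto t atTop (𝓝 0)) (hwk : Tendsto wk atTop (𝓝 w))
    (hmem : ∀ k, x + t k • wk k ∈ Ω) : ∀ᶠ τ in 𝓝[>](0:ℝ), x + τ • w ∈ Ω := by
  obtain ⟨m, c, b, rfl⟩ := hΩ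
  rw [show {x : E | ∀ i, (inner ℝ (c i) x : ℝ) ≤ b i} = ⋂ i, {x : E | (inner ℝ (c i) x : ℝ) ≤ b i} by
    ext; simp]
  simp only [mem_iInter]
  rw [eventually_all]
  intro j
  have hm : ∀ k, (inner ℝ (c j) x : ℝ) + t k * (inner ℝ (c j) (wk k) : ℝ) ≤ b j := by
    intro k
    have := hmem k j
    simpa [inner_add_right, real_inner_smul_right] using this
  have hA : (inner ℝ (c j) x : ℝ) ≤ b j := by
    have hlim : Tendsto (fun k => (inner ℝ (c j) x : ℝ) + t k * (inner ℝ (c j) (wk k) : ℝ)) atTop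
        (𝓝 ((inner ℝ (c j) x : ℝ) + 0 * (inner ℝ (c j) w : ℝ))) :=
      tendsto_const_nhds.add (ht0.mul (tendsto_const_nhds.inner hwk))
    have := le_of_tendsto hlim (Eventually.of_forall hm)
    simpa using this
  rcases eq_or_lt_of_le hA with hAeq | hAlt
  · have hB : (inner ℝ (c j) w : ℝ) ≤ 0 := by
      have h1 : ∀ k, (inner ℝ (c j) (wk k) : ℝ) ≤ 0 := by
        intro k
        nlinarith [hm k, ht k, hAeq]
      exact le_of_tendsto (tendsto_const_nhds.inner hwk) (Eventually.of_forall h1)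
    filter_upwards [self_mem_nhdsWithin] with τ (hτ : 0 < τ)
    show (inner ℝ (c j) (x + τ • w) : ℝ) ≤ b j
    rw [inner_add_right, real_inner_smul_right]
    nlinarith [mul_nonpos_of_nonneg_of_nonpos hτ.le hB]
  · have hcont : Tendsto (fun τ : ℝ => (inner ℝ (c j) x : ℝ) + τ * (inner ℝ (c j) w : ℝ))
        (𝓝[>](0:ℝ)) (𝓝 ((inner ℝ (c j) x : ℝ))) := by
      exact (myPolyTendsto (inner ℝ (c j) x : ℝ) (inner ℝ (c j) w : ℝ) 0).congr
        (fun τ => by ring)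
    filter_upwards [hcont.eventually_lt_const hAlt] with τ hτ
    show (inner ℝ (c j) (x + τ • w) : ℝ) ≤ b j
    rw [inner_add_right, real_inner_smul_right]
    exact hτ.le

lemma myPolyTan2 {Ω : Set E} (hΩ : IsPolyhedral Ω) {x w z : E} {t : ℕ → ℝ} {uk : ℕ → E}
    (ht : ∀ k, 0 < t k) (ht0 : Tendsto t atTop (𝓝 0)) (huk : Tendsto uk atTop (𝓝 z))
    (hmem : ∀ k, x + t k • w + (t k ^ 2 / 2) • uk k ∈ Ω) :
    ∀ᶠ τ in 𝓝[>](0:ℝ), x + τ • w + (τ ^ 2 / 2) • z ∈ Ω := by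
  obtain ⟨m, c, b, rfl⟩ := hΩ
  rw [show {x : E | ∀ i, (inner ℝ (c i) x : ℝ) ≤ b i} = ⋂ i, {x : E | (inner ℝ (c i) x : ℝ) ≤ b i} by
    ext; simp]
  simp only [mem_iInter]
  rw [eventually_all]
  intro j
  set A0 := (inner ℝ (c j) x : ℝ) with hA0
  set B0 := (inner ℝ (c j) w : ℝ) with hB0
  set C0 := (inner ℝ (c j) z : ℝ) with hC0
  have hm : ∀ k, A0 + t k * B0 + t k ^ 2 / 2 * (inner ℝ (c j) (uk k) : ℝ) ≤ b j := by
    intro k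
    have := hmem k j
    simpa [inner_add_right, real_inner_smul_right] using this
  have hCk : Tendsto (fun k => (inner ℝ (c j) (uk k) : ℝ)) atTop (𝓝 C0) :=
    tendsto_const_nhds.inner huk
  have hA : A0 ≤ b j := by
    have hlim : Tendsto (fun k => A0 + t k * B0 + t k ^ 2 / 2 * (inner ℝ (c j) (uk k) : ℝ)) atTop
        (𝓝 (A0 + 0 * B0 + 0 ^ 2 / 2 * C0)) :=
      (tendsto_const_nhds.add (ht0.mul tendsto_const_nhds)).add
        (((ht0.pow 2).div_const 2).mul hCk)
    have := le_of_tendsto hlim (Eventually.of_forall hm)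
    simpa using this
  have goal_of : ∀ᶠ τ in 𝓝[>](0:ℝ), A0 + τ * B0 + τ ^ 2 / 2 * C0 ≤ b j →
      (inner ℝ (c j) (x + τ • w + (τ ^ 2 / 2) • z) : ℝ) ≤ b j := by
    filter_upwards with τ h
    rw [inner_add_right, inner_add_right, real_inner_smul_right, real_inner_smul_right]
    exact h
  rcases eq_or_lt_of_le hA with hAeq | hAlt
  · have hm' : ∀ k, B0 + t k / 2 * (inner ℝ (c j) (uk k) : ℝ) ≤ 0 := by
      intro k
      have h1 := hm k
      have h2 := ht k
      rw [← hAeq] at h1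
      have h4 : t k * (B0 + t k / 2 * (inner ℝ (c j) (uk k) : ℝ)) ≤ 0 := by nlinarith
      by_contra hcon
      push_neg at hcon
      nlinarith [mul_pos h2 hcon]
    have hB : B0 ≤ 0 := by
      have hlim : Tendsto (fun k => B0 + t k / 2 * (inner ℝ (c j) (uk k) : ℝ)) atTop
          (𝓝 (B0 + 0 / 2 * C0)) := tendsto_const_nhds.add (((ht0.div_const 2)).mul hCk)
      have := le_of_tendsto hlim (Eventually.of_forall hm')
      simpa using this
    rcases eq_or_lt_of_le hB with hBeq | hBlt
    · have hC : C0 ≤ 0 := by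
        have h1 : ∀ k, (inner ℝ (c j) (uk k) : ℝ) ≤ 0 := by
          intro k
          have h2 := hm' k
          rw [← hBeq] at h2
          have h3 := ht k
          nlinarith
        exact le_of_tendsto hCk (Eventually.of_forall h1)
      filter_upwards [goal_of, self_mem_nhdsWithin] with τ himp (hτ : 0 < τ)
      apply himp
      rw [hBeq]
      nlinarith [mul_nonpos_of_nonneg_of_nonpos (by positivity : (0:ℝ) ≤ τ^2/2) hC]
    · have hcont : Tendsto (fun τ : ℝ => B0 + τ / 2 * C0) (𝓝[>](0:ℝ)) (𝓝 B0) := by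
        exact (myPolyTendsto B0 (C0/2) 0).congr (fun τ => by ring)
      filter_upwards [goal_of, self_mem_nhdsWithin, hcont.eventually_lt_const hBlt]
        with τ himp (hτ : 0 < τ) hlt
      apply himp
      have : τ * (B0 + τ / 2 * C0) ≤ 0 := mul_nonpos_of_nonneg_of_nonpos hτ.le hlt.le
      nlinarith
  · have hcont : Tendsto (fun τ : ℝ => A0 + τ * B0 + τ ^ 2 / 2 * C0) (𝓝[>](0:ℝ)) (𝓝 A0) := by
      exact (myPolyTendsto A0 B0 (C0/2)).congr (fun τ => by ring)
    filter_upwards [goal_of, hcont.eventually_lt_const hAlt] with τ himp hlt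
    exact himp hlt.le

end myHelpers
section myHelpers2
variable {X : Type*} [NormedAddCommGroup X] [InnerProductSpace ℝ X] {ϑ : X → EReal}

lemma myMatch2 (R : PLQRepr ϑ) {i j : Fin R.s} {yb w z : X}
    (hyi : yb ∈ R.piece i) (hyj : yb ∈ R.piece j)
    (hpi : ∀ᶠ τ in 𝓝[>](0:ℝ), yb + τ • w + (τ^2/2) • z ∈ R.piece i)
    (hpj : ∀ᶠ τ in 𝓝[>](0:ℝ), yb + τ • w + (τ^2/2) • z ∈ R.piece j) :
    (inner ℝ (R.A i yb + R.a i) w : ℝ) = (inner ℝ (R.A j yb + R.a j) w : ℝ) ∧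
    (inner ℝ (R.A i yb + R.a i) z : ℝ) + (inner ℝ (R.A i w) w : ℝ)
      = (inner ℝ (R.A j yb + R.a j) z : ℝ) + (inner ℝ (R.A j w) w : ℝ) := by
  have hy : (1/2 * (inner ℝ (R.A i yb) yb : ℝ) + (inner ℝ (R.a i) yb : ℝ) + R.cst i)
      = (1/2 * (inner ℝ (R.A j yb) yb : ℝ) + (inner ℝ (R.a j) yb : ℝ) + R.cst j) := by
    have := (R.val i yb hyi).symm.trans (R.val j yb hyj)
    exact_mod_cast this
  have key : ∀ᶠ τ in 𝓝[>](0:ℝ),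
      ((inner ℝ (R.A i yb + R.a i) w : ℝ) - (inner ℝ (R.A j yb + R.a j) w : ℝ)) * τ
      + (1/2*(((inner ℝ (R.A i yb + R.a i) z : ℝ) + (inner ℝ (R.A i w) w : ℝ))
           - ((inner ℝ (R.A j yb + R.a j) z : ℝ) + (inner ℝ (R.A j w) w : ℝ)))) * τ^2
      + (1/4*(((inner ℝ (R.A i w) z : ℝ) + (inner ℝ (R.A i z) w : ℝ))
           - ((inner ℝ (R.A j w) z : ℝ) + (inner ℝ (R.A j z) w : ℝ)))) * τ^3
      + (1/8*((inner ℝ (R.A i z) z : ℝ) - (inner ℝ (R.A j z) z : ℝ))) * τ^4 = 0 := by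
    filter_upwards [hpi, hpj] with τ h1 h2
    have hq : (1/2 * (inner ℝ (R.A i (yb + τ • w + (τ^2/2) • z)) (yb + τ • w + (τ^2/2) • z) : ℝ)
          + (inner ℝ (R.a i) (yb + τ • w + (τ^2/2) • z) : ℝ) + R.cst i)
        = (1/2 * (inner ℝ (R.A j (yb + τ • w + (τ^2/2) • z)) (yb + τ • w + (τ^2/2) • z) : ℝ)
          + (inner ℝ (R.a j) (yb + τ • w + (τ^2/2) • z) : ℝ) + R.cst j) := by
      have := (R.val i _ h1).symm.trans (R.val j _ h2)
      exact_mod_cast this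
    rw [myQexpand (R.A i) (R.a i) (R.cst i) (R.symm i) yb w z τ,
      myQexpand (R.A j) (R.a j) (R.cst j) (R.symm j) yb w z τ] at hq
    linear_combination hq - hy
  obtain ⟨h1, h2⟩ := myVanish4 key
  exact ⟨by linarith, by linarith⟩

lemma myF1 (R : PLQRepr ϑ) {i : Fin R.s} {yb w : X} (hyb : yb ∈ R.piece i)
    {s : ℕ → ℝ} {ω : ℕ → X}
    (hs : ∀ᶠ n in atTop, 0 < s n) (hsl : Tendsto s atTop (𝓝 0))
    (hωl : Tendsto ω atTop (𝓝 w))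
    (hm : ∀ᶠ n in atTop, yb + s n • ω n ∈ R.piece i) :
    Tendsto (fun n => (((s n)⁻¹ : ℝ) : EReal) * (ϑ (yb + s n • ω n) - ϑ yb)) atTop
      (𝓝 (((inner ℝ (R.A i yb + R.a i) w : ℝ) : EReal))) := by
  have hval : ∀ᶠ n in atTop,
      ((((inner ℝ (R.A i yb + R.a i) (ω n) : ℝ)
          + s n / 2 * (inner ℝ (R.A i (ω n)) (ω n) : ℝ) : ℝ)) : EReal)
      = (((s n)⁻¹ : ℝ) : EReal) * (ϑ (yb + s n • ω n) - ϑ yb) := by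
    filter_upwards [hs, hm] with n hn hmn
    rw [R.val i _ hmn, R.val i yb hyb]
    norm_cast
    have hpt : yb + s n • ω n = yb + s n • ω n + ((s n)^2/2) • (0:X) := by simp
    rw [hpt, myQexpand (R.A i) (R.a i) (R.cst i) (R.symm i) yb (ω n) 0 (s n)]
    simp only [map_zero, inner_zero_right, inner_zero_left]
    field_simp
    ring
  have hreal : Tendsto (fun n => (inner ℝ (R.A i yb + R.a i) (ω n) : ℝ)
      + s n / 2 * (inner ℝ (R.A i (ω n)) (ω n) : ℝ)) atTop
      (𝓝 ((inner ℝ (R.A i yb + R.a i) w : ℝ))) := by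
    have := ((tendsto_const_nhds (x := R.A i yb + R.a i)).inner hωl).add ((hsl.div_const 2).mul
      ((((R.A i).continuous.tendsto w).comp hωl).inner hωl))
    simpa using this
  exact Tendsto.congr' hval (EReal.tendsto_coe.2 hreal)

lemma myF2 (R : PLQRepr ϑ) {i : Fin R.s} {yb w z : X} (hyb : yb ∈ R.piece i)
    {s : ℕ → ℝ} {zk : ℕ → X}
    (hs : ∀ᶠ n in atTop, 0 < s n) (hsl : Tendsto s atTop (𝓝 0))
    (hzl : Tendsto zk atTop (𝓝 z))
    (hm : ∀ᶠ n in atTop, yb + s n • w + (s n ^ 2 / 2) • zk n ∈ R.piece i)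
    {d : ℝ} (hd : (inner ℝ (R.A i yb + R.a i) w : ℝ) = d) :
    Tendsto (fun n => ((2 / s n ^ 2 : ℝ) : EReal) *
        (ϑ (yb + s n • w + (s n ^ 2 / 2) • zk n) - ϑ yb - ((s n : ℝ) : EReal) * ((d : ℝ) : EReal)))
      atTop
      (𝓝 ((((inner ℝ (R.A i yb + R.a i) z : ℝ) + (inner ℝ (R.A i w) w : ℝ) : ℝ)) : EReal)) := by
  have hval : ∀ᶠ n in atTop,
      ((((inner ℝ (R.A i yb + R.a i) (zk n) : ℝ) + (inner ℝ (R.A i w) w : ℝ)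
          + s n / 2 * ((inner ℝ (R.A i w) (zk n) : ℝ) + (inner ℝ (R.A i (zk n)) w : ℝ))
          + s n ^ 2 / 4 * (inner ℝ (R.A i (zk n)) (zk n) : ℝ) : ℝ)) : EReal)
      = ((2 / s n ^ 2 : ℝ) : EReal) *
        (ϑ (yb + s n • w + (s n ^ 2 / 2) • zk n) - ϑ yb - ((s n : ℝ) : EReal) * ((d : ℝ) : EReal)) := by
    filter_upwards [hs, hm] with n hn hmn
    rw [R.val i _ hmn, R.val i yb hyb]
    norm_cast
    have hpt : yb + s n • w + (s n ^ 2 / 2) • zk n = yb + s n • w + ((s n)^2/2) • zk n := rfl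
    rw [hpt, myQexpand (R.A i) (R.a i) (R.cst i) (R.symm i) yb w (zk n) (s n), ← hd]
    field_simp
    ring
  have hreal : Tendsto (fun n => (inner ℝ (R.A i yb + R.a i) (zk n) : ℝ)
      + (inner ℝ (R.A i w) w : ℝ)
      + s n / 2 * ((inner ℝ (R.A i w) (zk n) : ℝ) + (inner ℝ (R.A i (zk n)) w : ℝ))
      + s n ^ 2 / 4 * (inner ℝ (R.A i (zk n)) (zk n) : ℝ)) atTop
      (𝓝 ((inner ℝ (R.A i yb + R.a i) z : ℝ) + (inner ℝ (R.A i w) w : ℝ))) := by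
    have := ((((tendsto_const_nhds (x := R.A i yb + R.a i)).inner hzl).add
      (tendsto_const_nhds (x := (inner ℝ (R.A i w) w : ℝ)))).add
      ((hsl.div_const 2).mul (((tendsto_const_nhds (x := R.A i w)).inner hzl).add
        ((((R.A i).continuous.tendsto z).comp hzl).inner (tendsto_const_nhds (x := w)))))).add
      (((hsl.pow 2).div_const 4).mul ((((R.A i).continuous.tendsto z).comp hzl).inner hzl))
    simpa using this
  exact Tendsto.congr' hval (EReal.tendsto_coe.2 hreal)

end myHelpers2
set_option maxHeartbeats 2000000 in
/-- parabolic subderivatives of convex PWLQ functions exist as full limits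
along the straight parabola, with an explicit value. -/
theorem stmt14 {m : ℕ} (ϑ : Euc m → EReal) (hbot : ∀ y, ϑ y ≠ ⊥)
    (R : PLQRepr ϑ) (hconv : ERealConvexOn ϑ)
    (yb : Euc m) (hyb : ϑ yb ≠ ⊤)
    (w : Euc m) (hw : w ∈ tangentConeB (edom ϑ) yb)
    (z : Euc m) (hz : z ∈ secondTangent (edom ϑ) yb w) :
    ∃ i0 : Fin R.s, yb ∈ R.piece i0 ∧ z ∈ secondTangent (R.piece i0) yb w ∧
      parabolicSubderiv ϑ yb w z =
        (((inner ℝ (R.A i0 yb + R.a i0) z : ℝ) + (inner ℝ w (R.A i0 w) : ℝ) : ℝ) : EReal) ∧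
      Tendsto (fun t : ℝ =>
          ((2 / t ^ 2 : ℝ) : EReal) *
            (ϑ (yb + t • w + (t ^ 2 / 2) • z) - ϑ yb - (t : EReal) * subderiv ϑ yb w))
        (𝓝[>] (0:ℝ)) (𝓝 (parabolicSubderiv ϑ yb w z)) := by
  classical
  obtain ⟨t, u, ht, ht0, hu, hmemdom⟩ := hz
  -- choose the piece i0 containing infinitely many points of the approximating parabola
  have hmem' : ∀ᶠ k in atTop, ∃ i, yb + t k • w + (t k ^ 2 / 2) • u k ∈ R.piece i := by
    refine Eventually.of_forall fun k => ?_
    have hk := hmemdom k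
    rw [R.dom_eq] at hk
    exact mem_iUnion.mp hk
  obtain ⟨i0, φ, hφ, hm0⟩ := myPigeon hmem'
  have ht0' : ∀ n, 0 < t (φ n) := fun n => ht _
  have htl : Tendsto (fun n => t (φ n)) atTop (𝓝 0) := ht0.comp hφ.tendsto_atTop
  have hul : Tendsto (fun n => u (φ n)) atTop (𝓝 z) := hu.comp hφ.tendsto_atTop
  have hylim : Tendsto (fun n => yb + t (φ n) • w + (t (φ n) ^ 2 / 2) • u (φ n)) atTop (𝓝 yb) := by
    have := ((tendsto_const_nhds (x := yb)).add (htl.smul_const w)).add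
      (((htl.pow 2).div_const 2).smul hul)
    simpa using this
  have hyb0 : yb ∈ R.piece i0 := myPolyLim (R.poly i0) hylim hm0
  have hz2 : z ∈ secondTangent (R.piece i0) yb w := ⟨_, _, ht0', htl, hul, hm0⟩
  have hpar0 : ∀ᶠ τ in 𝓝[>](0:ℝ), yb + τ • w + (τ ^ 2 / 2) • z ∈ R.piece i0 :=
    myPolyTan2 (R.poly i0) ht0' htl hul hm0
  have hseg0 : ∀ᶠ τ in 𝓝[>](0:ℝ), yb + τ • w ∈ R.piece i0 := by
    have hwkl : Tendsto (fun n => w + (t (φ n) / 2) • u (φ n)) atTop (𝓝 w) := by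
      have := (tendsto_const_nhds (x := w)).add ((htl.div_const 2).smul hul)
      simpa using this
    have hmm : ∀ n, yb + t (φ n) • (w + (t (φ n) / 2) • u (φ n)) ∈ R.piece i0 := by
      intro n
      have heq : yb + t (φ n) • (w + (t (φ n) / 2) • u (φ n))
          = yb + t (φ n) • w + (t (φ n) ^ 2 / 2) • u (φ n) := by
        rw [smul_add, smul_smul, ← add_assoc, show t (φ n) * (t (φ n) / 2) = t (φ n) ^ 2 / 2 by
          ring]
      rw [heq]
      exact hm0 n
    exact myPolyTan (R.poly i0) ht0' htl hwkl hmm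
  -- the point identity for the straight parabola
  have hptid : ∀ τ : ℝ, yb + τ • (w + (τ / 2) • z) = yb + τ • w + (τ ^ 2 / 2) • z := by
    intro τ
    rw [smul_add, smul_smul, ← add_assoc, show τ * (τ / 2) = τ ^ 2 / 2 by ring]
  -- the canonical test sequence τ_n → 0+
  have hτpos : ∀ n : ℕ, (0:ℝ) < 1 / (n + 1) := fun n => by positivity
  have hτ0 : Tendsto (fun n : ℕ => 1 / ((n:ℝ) + 1)) atTop (𝓝 0) :=
    tendsto_one_div_add_atTop_nhds_zero_nat
  have hτin : Tendsto (fun n : ℕ => 1 / ((n:ℝ) + 1)) atTop (𝓝[>](0:ℝ)) :=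
    tendsto_nhdsWithin_iff.mpr ⟨hτ0, Eventually.of_forall fun n => hτpos n⟩
  -- the subderivative
  have hsub : subderiv ϑ yb w = (((inner ℝ (R.A i0 yb + R.a i0) w : ℝ)) : EReal) := by
    unfold subderiv
    apply myLiminfEq
    · -- lower bound
      intro b hb
      by_contra hcon
      rw [Filter.not_eventually] at hcon
      have hcon' : ∃ᶠ p in (𝓝[>](0:ℝ)) ×ˢ 𝓝 w,
          ((p.1⁻¹ : ℝ) : EReal) * (ϑ (yb + p.1 • p.2) - ϑ yb) ≤ b :=
        hcon.mono fun p hp => not_lt.mp hp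
      obtain ⟨ns, hns, hP⟩ := exists_seq_forall_of_frequently hcon'
      have h1 : Tendsto (fun n => (ns n).1) atTop (𝓝[>](0:ℝ)) := tendsto_fst.comp hns
      have h2 : Tendsto (fun n => (ns n).2) atTop (𝓝 w) := tendsto_snd.comp hns
      have hev : ∀ᶠ n in atTop, 0 < (ns n).1 := h1.eventually self_mem_nhdsWithin
      have hdom : ∀ᶠ n in atTop, ∃ i, 0 < (ns n).1 ∧
          yb + (ns n).1 • (ns n).2 ∈ R.piece i := by
        filter_upwards [hev] with n hn
        have hne : ϑ (yb + (ns n).1 • (ns n).2) ≠ ⊤ := by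
          intro htop
          have hPn := hP n
          rw [htop, R.val i0 yb hyb0, EReal.top_sub_coe,
            EReal.coe_mul_top_of_pos (by positivity)] at hPn
          exact absurd (lt_of_le_of_lt hPn hb) (by simp)
        have hmem2 : yb + (ns n).1 • (ns n).2 ∈ edom ϑ := hne
        rw [R.dom_eq] at hmem2
        obtain ⟨i, hi⟩ := mem_iUnion.mp hmem2
        exact ⟨i, hn, hi⟩
      obtain ⟨i1, ψ, hψ, hPP⟩ := myPigeon hdom
      have hs1 : ∀ n, 0 < (ns (ψ n)).1 := fun n => (hPP n).1
      have hm1 : ∀ n, yb + (ns (ψ n)).1 • (ns (ψ n)).2 ∈ R.piece i1 := fun n => (hPP n).2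
      have hsl : Tendsto (fun n => (ns (ψ n)).1) atTop (𝓝 0) :=
        (h1.mono_right nhdsWithin_le_nhds).comp hψ.tendsto_atTop
      have hωl : Tendsto (fun n => (ns (ψ n)).2) atTop (𝓝 w) := h2.comp hψ.tendsto_atTop
      have hylim1 : Tendsto (fun n => yb + (ns (ψ n)).1 • (ns (ψ n)).2) atTop (𝓝 yb) := by
        have := (tendsto_const_nhds (x := yb)).add (hsl.smul hωl)
        simpa using this
      have hyb1 : yb ∈ R.piece i1 := myPolyLim (R.poly i1) hylim1 hm1
      have hseg1 : ∀ᶠ τ in 𝓝[>](0:ℝ), yb + τ • w ∈ R.piece i1 :=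
        myPolyTan (R.poly i1) hs1 hsl hωl hm1
      have hd1 : (inner ℝ (R.A i1 yb + R.a i1) w : ℝ) = (inner ℝ (R.A i0 yb + R.a i0) w : ℝ) :=
        (myMatch2 (z := 0) R hyb1 hyb0 (by simpa using hseg1) (by simpa using hseg0)).1
      have hlimF := myF1 R hyb1 (Eventually.of_forall hs1) hsl hωl (Eventually.of_forall hm1)
      rw [hd1] at hlimF
      obtain ⟨n, hn⟩ := (hlimF.eventually_const_lt hb).exists
      exact absurd hn (not_lt.mpr (hP (ψ n)))
    · -- upper bound
      intro b hb
      have hwl : Tendsto (fun n : ℕ => w + ((1 / ((n:ℝ) + 1)) / 2) • z) atTop (𝓝 w) := by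
        have := (tendsto_const_nhds (x := w)).add ((hτ0.div_const 2).smul_const z)
        simpa using this
      have hσ : Tendsto (fun n : ℕ => ((1 / ((n:ℝ) + 1) : ℝ), w + ((1 / ((n:ℝ) + 1)) / 2) • z))
          atTop ((𝓝[>](0:ℝ)) ×ˢ 𝓝 w) := hτin.prodMk hwl
      have hmm : ∀ᶠ n : ℕ in atTop,
          yb + (1 / ((n:ℝ) + 1)) • (w + ((1 / ((n:ℝ) + 1)) / 2) • z) ∈ R.piece i0 := by
        filter_upwards [hτin.eventually hpar0] with n hn
        rw [hptid]
        exact hn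
      have hlimF := myF1 R hyb0 (Eventually.of_forall hτpos) hτ0 hwl hmm
      have hev := hlimF.eventually_lt_const hb
      exact hσ.frequently hev.frequently
  -- full limit of the parabolic difference quotient along the straight parabola
  have hpartend : Tendsto (fun τ : ℝ => ((2 / τ ^ 2 : ℝ) : EReal) *
      (ϑ (yb + τ • w + (τ ^ 2 / 2) • z) - ϑ yb
        - (τ : EReal) * (((inner ℝ (R.A i0 yb + R.a i0) w : ℝ)) : EReal)))
      (𝓝[>](0:ℝ))
      (𝓝 ((((inner ℝ (R.A i0 yb + R.a i0) z : ℝ) + (inner ℝ (R.A i0 w) w : ℝ) : ℝ)) : EReal)) := by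
    have hval : ∀ᶠ τ in 𝓝[>](0:ℝ),
        ((((inner ℝ (R.A i0 yb + R.a i0) z : ℝ) + (inner ℝ (R.A i0 w) w : ℝ))
          + (((inner ℝ (R.A i0 w) z : ℝ) + (inner ℝ (R.A i0 z) w : ℝ))/2) * τ
          + ((inner ℝ (R.A i0 z) z : ℝ)/4) * τ^2 : ℝ) : EReal)
        = ((2 / τ ^ 2 : ℝ) : EReal) *
          (ϑ (yb + τ • w + (τ ^ 2 / 2) • z) - ϑ yb
            - (τ : EReal) * (((inner ℝ (R.A i0 yb + R.a i0) w : ℝ)) : EReal)) := by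
      filter_upwards [hpar0, self_mem_nhdsWithin] with τ hτm (hτ : 0 < τ)
      rw [R.val i0 _ hτm, R.val i0 yb hyb0]
      norm_cast
      rw [show yb + τ • w + (τ ^ 2 / 2) • z = yb + τ • w + (τ^2/2) • z from rfl,
        myQexpand (R.A i0) (R.a i0) (R.cst i0) (R.symm i0) yb w z τ]
      field_simp
      ring
    have hrealt := myPolyTendsto
      ((inner ℝ (R.A i0 yb + R.a i0) z : ℝ) + (inner ℝ (R.A i0 w) w : ℝ))
      (((inner ℝ (R.A i0 w) z : ℝ) + (inner ℝ (R.A i0 z) w : ℝ))/2)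
      ((inner ℝ (R.A i0 z) z : ℝ)/4)
    exact Tendsto.congr' hval (EReal.tendsto_coe.2 hrealt)
  have hpareq : parabolicSubderiv ϑ yb w z =
      ((((inner ℝ (R.A i0 yb + R.a i0) z : ℝ) + (inner ℝ (R.A i0 w) w : ℝ) : ℝ)) : EReal) := by
    unfold parabolicSubderiv
    rw [hsub]
    apply myLiminfEq
    · -- lower bound
      intro b hb
      by_contra hcon
      rw [Filter.not_eventually] at hcon
      have hcon' : ∃ᶠ p in (𝓝[>](0:ℝ)) ×ˢ 𝓝 z,
          ((2 / p.1 ^ 2 : ℝ) : EReal) * (ϑ (yb + p.1 • w + (p.1 ^ 2 / 2) • p.2) - ϑ yb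
            - (p.1 : EReal) * (((inner ℝ (R.A i0 yb + R.a i0) w : ℝ)) : EReal)) ≤ b :=
        hcon.mono fun p hp => not_lt.mp hp
      obtain ⟨ns, hns, hP⟩ := exists_seq_forall_of_frequently hcon'
      have h1 : Tendsto (fun n => (ns n).1) atTop (𝓝[>](0:ℝ)) := tendsto_fst.comp hns
      have h2 : Tendsto (fun n => (ns n).2) atTop (𝓝 z) := tendsto_snd.comp hns
      have hev : ∀ᶠ n in atTop, 0 < (ns n).1 := h1.eventually self_mem_nhdsWithin
      have hdom : ∀ᶠ n in atTop, ∃ i, 0 < (ns n).1 ∧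
          yb + (ns n).1 • w + ((ns n).1 ^ 2 / 2) • (ns n).2 ∈ R.piece i := by
        filter_upwards [hev] with n hn
        have hne : ϑ (yb + (ns n).1 • w + ((ns n).1 ^ 2 / 2) • (ns n).2) ≠ ⊤ := by
          intro htop
          have hPn := hP n
          rw [htop, R.val i0 yb hyb0, EReal.top_sub_coe, ← EReal.coe_mul,
            EReal.top_sub_coe,
            EReal.coe_mul_top_of_pos (by exact div_pos two_pos (pow_pos hn 2))] at hPn
          exact absurd (lt_of_le_of_lt hPn hb) (by simp)
        have hmem2 : yb + (ns n).1 • w + ((ns n).1 ^ 2 / 2) • (ns n).2 ∈ edom ϑ := hne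
        rw [R.dom_eq] at hmem2
        obtain ⟨i, hi⟩ := mem_iUnion.mp hmem2
        exact ⟨i, hn, hi⟩
      obtain ⟨i1, ψ, hψ, hPP⟩ := myPigeon hdom
      have hs1 : ∀ n, 0 < (ns (ψ n)).1 := fun n => (hPP n).1
      have hm1 : ∀ n, yb + (ns (ψ n)).1 • w + ((ns (ψ n)).1 ^ 2 / 2) • (ns (ψ n)).2 ∈ R.piece i1 :=
        fun n => (hPP n).2
      have hsl : Tendsto (fun n => (ns (ψ n)).1) atTop (𝓝 0) :=
        (h1.mono_right nhdsWithin_le_nhds).comp hψ.tendsto_atTop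
      have hzl : Tendsto (fun n => (ns (ψ n)).2) atTop (𝓝 z) := h2.comp hψ.tendsto_atTop
      have hylim1 : Tendsto (fun n =>
          yb + (ns (ψ n)).1 • w + ((ns (ψ n)).1 ^ 2 / 2) • (ns (ψ n)).2) atTop (𝓝 yb) := by
        have := ((tendsto_const_nhds (x := yb)).add (hsl.smul_const w)).add
          (((hsl.pow 2).div_const 2).smul hzl)
        simpa using this
      have hyb1 : yb ∈ R.piece i1 := myPolyLim (R.poly i1) hylim1 hm1
      have hpar1 : ∀ᶠ τ in 𝓝[>](0:ℝ), yb + τ • w + (τ ^ 2 / 2) • z ∈ R.piece i1 :=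
        myPolyTan2 (R.poly i1) hs1 hsl hzl hm1
      have hmatch := myMatch2 R hyb1 hyb0 (by simpa using hpar1) (by simpa using hpar0)
      have hlimF := myF2 R hyb1 (Eventually.of_forall hs1) hsl hzl (Eventually.of_forall hm1)
        hmatch.1
      rw [hmatch.2] at hlimF
      obtain ⟨n, hn⟩ := (hlimF.eventually_const_lt hb).exists
      exact absurd hn (not_lt.mpr (hP (ψ n)))
    · -- upper bound
      intro b hb
      have hσ : Tendsto (fun n : ℕ => ((1 / ((n:ℝ) + 1) : ℝ), z))
          atTop ((𝓝[>](0:ℝ)) ×ˢ 𝓝 z) := hτin.prodMk tendsto_const_nhds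
      have hev := (hpartend.comp hτin).eventually_lt_const hb
      exact hσ.frequently hev.frequently
  have hcomm : (inner ℝ w (R.A i0 w) : ℝ) = (inner ℝ (R.A i0 w) w : ℝ) := real_inner_comm _ _
  refine ⟨i0, hyb0, hz2, by rw [hpareq, hcomm], ?_⟩
  rw [hpareq, hsub]
  exact hpartend
end
end

section
/- Consider the composite problem minimize φ₀(x) + ϑ(f(x)) with φ₀, f twice differentiable at x̄ and ϑ convex piecewise linear-quadratic, and let (x̄, λ̄) solve the KKT system ∇_x L(x̄,λ̄) = 0, λ̄ ∈ ∂ϑ(f(x̄)). Then the Lagrange multiplier set Λ(x̄, v̄) with v̄ = −∇φ₀(x̄) is the singleton {λ̄} if and only if K_ϑ(f(x̄), λ̄)* ∩ ker ∇f(x̄)* = {0}, where K_ϑ(f(x̄),λ̄) = {u : dϑ(f(x̄))(u) = ⟨u, λ̄⟩} is the critical cone of ϑ and C* denotes the polar cone. -/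
open Filter Topology Metric Set

noncomputable section

/-! ### Auxiliary development for stmt19 -/

section AuxStmt19

open Filter Topology Set

variable {E : Type*} [NormedAddCommGroup E] [InnerProductSpace ℝ E]

/-- Convex (global) subgradient inequality. -/
def CSub (φ : E → EReal) (x v : E) : Prop :=
  ∀ z, φ x + ((inner ℝ v (z - x) : ℝ) : EReal) ≤ φ z

lemma frechet_subset_lim (φ : E → EReal) (x : E) :
    frechetSubdiff φ x ⊆ limSubdiff φ x := fun v hv =>
  ⟨fun _ => x, fun _ => v, tendsto_const_nhds, tendsto_const_nhds, tendsto_const_nhds,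
    fun _ => hv⟩

lemma csub_mem_frechet {φ : E → EReal} {x v : E} (h : CSub φ x v) :
    v ∈ frechetSubdiff φ x := by
  intro ε hε
  filter_upwards with y
  refine le_trans (add_le_add (le_refl _) ?_) (h y)
  refine EReal.coe_le_coe_iff.mpr ?_
  have : 0 ≤ ε * ‖y - x‖ := mul_nonneg hε.le (norm_nonneg _)
  linarith

lemma frechet_csub {φ : E → EReal} (hconv : ERealConvexOn φ) (hbot : ∀ y, φ y ≠ ⊥)
    {x v : E} (hfin : φ x ≠ ⊤) (h : v ∈ frechetSubdiff φ x) : CSub φ x v := by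
  obtain ⟨p, hp⟩ : ∃ p : ℝ, φ x = (p : EReal) :=
    ⟨(φ x).toReal, (EReal.coe_toReal hfin (hbot x)).symm⟩
  intro z
  rcases eq_or_ne (φ z) ⊤ with hz | hz
  · simp [hz]
  obtain ⟨s, hs⟩ : ∃ s : ℝ, φ z = (s : EReal) :=
    ⟨(φ z).toReal, (EReal.coe_toReal hz (hbot z)).symm⟩
  rw [hp, hs, ← EReal.coe_add, EReal.coe_le_coe_iff]
  by_cases hzx : z = x
  · subst hzx
    rw [hp] at hs
    simp [EReal.coe_eq_coe_iff.mp hs]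
  have hnorm : 0 < ‖z - x‖ := by
    rw [norm_pos_iff]
    exact sub_ne_zero_of_ne hzx
  have key : ∀ ε : ℝ, 0 < ε → (inner ℝ v (z - x) : ℝ) - ε * ‖z - x‖ ≤ s - p := by
    intro ε hε
    obtain ⟨δ, hδ, hball⟩ := Metric.eventually_nhds_iff.mp (h ε hε)
    set t : ℝ := min (1/2) (δ / (2 * (‖z - x‖ + 1))) with ht_def
    have ht0 : 0 < t := by
      apply lt_min (by norm_num)
      positivity
    have ht1 : t ≤ 1 := le_trans (min_le_left _ _) (by norm_num)
    set y : E := x + t • (z - x) with hy_def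
    have hyball : dist y x < δ := by
      rw [dist_eq_norm]
      have : y - x = t • (z - x) := by rw [hy_def, add_sub_cancel_left]
      rw [this, norm_smul, Real.norm_eq_abs, abs_of_pos ht0]
      have h1 : t ≤ δ / (2 * (‖z - x‖ + 1)) := min_le_right _ _
      have h2 : t * ‖z - x‖ ≤ δ / (2 * (‖z - x‖ + 1)) * ‖z - x‖ :=
        mul_le_mul_of_nonneg_right h1 (norm_nonneg _)
      have h3 : δ / (2 * (‖z - x‖ + 1)) * ‖z - x‖ < δ := by
        rw [div_mul_eq_mul_div, div_lt_iff₀ (by positivity)]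
        nlinarith [norm_nonneg (z - x)]
      linarith
    have hfre := hball hyball
    have hyx : y - x = t • (z - x) := by rw [hy_def, add_sub_cancel_left]
    have hinner : (inner ℝ v (y - x) : ℝ) = t * (inner ℝ v (z - x) : ℝ) := by
      rw [hyx, real_inner_smul_right]
    have hnorm2 : ‖y - x‖ = t * ‖z - x‖ := by
      rw [hyx, norm_smul, Real.norm_eq_abs, abs_of_pos ht0]
    have hcv := hconv z x t ht0.le ht1
    have hyzx : t • z + (1 - t) • x = y := by
      rw [hy_def]
      module
    rw [hyzx, hp, hs] at hcv
    have hcv' : φ y ≤ (((t * s + (1 - t) * p : ℝ)) : EReal) := by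
      rw [EReal.coe_add, EReal.coe_mul, EReal.coe_mul]
      exact hcv
    rw [hp, hinner, hnorm2] at hfre
    have hfre' : ((p + (t * (inner ℝ v (z - x) : ℝ) - ε * (t * ‖z - x‖)) : ℝ) : EReal)
        ≤ (((t * s + (1 - t) * p : ℝ)) : EReal) := by
      rw [EReal.coe_add]
      exact le_trans hfre hcv'
    have hreal := EReal.coe_le_coe_iff.mp hfre'
    nlinarith
  have key2 : ∀ η : ℝ, 0 < η → (inner ℝ v (z - x) : ℝ) ≤ s - p + η := by
    intro η hη
    have hε : 0 < η / ‖z - x‖ := div_pos hη hnorm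
    have := key _ hε
    rw [div_mul_cancel₀ _ (ne_of_gt hnorm)] at this
    linarith
  linarith [le_of_forall_pos_le_add key2]

lemma lim_csub {φ : E → EReal} (hconv : ERealConvexOn φ) (hbot : ∀ y, φ y ≠ ⊥)
    {x v : E} {r : ℝ} (hx : φ x = (r : EReal)) (h : v ∈ limSubdiff φ x) : CSub φ x v := by
  obtain ⟨xk, vk, hxk, hφk, hvk, hfk⟩ := h
  intro z
  rcases eq_or_ne (φ z) ⊤ with hz | hz
  · simp [hz]
  obtain ⟨s, hs⟩ : ∃ s : ℝ, φ z = (s : EReal) :=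
    ⟨(φ z).toReal, (EReal.coe_toReal hz (hbot z)).symm⟩
  rw [hx] at hφk
  have hfin : ∀ᶠ k in atTop, φ (xk k) ≠ ⊤ := by
    have : ∀ᶠ k in atTop, φ (xk k) ∈ Iio (⊤ : EReal) :=
      hφk.eventually (isOpen_Iio.mem_nhds (EReal.coe_lt_top r))
    filter_upwards [this] with k hk
    exact ne_of_lt hk
  have hineq : ∀ᶠ k in atTop,
      (φ (xk k)).toReal + (inner ℝ (vk k) (z - xk k) : ℝ) ≤ s := by
    filter_upwards [hfin] with k hk
    have hcs : CSub φ (xk k) (vk k) := frechet_csub hconv hbot hk (hfk k)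
    have := hcs z
    rw [hs, ← EReal.coe_toReal hk (hbot (xk k)), ← EReal.coe_add,
      EReal.coe_le_coe_iff] at this
    exact this
  have htend : Tendsto (fun k => (φ (xk k)).toReal + (inner ℝ (vk k) (z - xk k) : ℝ))
      atTop (𝓝 (r + (inner ℝ v (z - x) : ℝ))) := by
    apply Tendsto.add
    · have h1 : Tendsto (fun k => (φ (xk k)).toReal) atTop (𝓝 ((r : EReal).toReal)) :=
        (EReal.tendsto_toReal (EReal.coe_ne_top r) (EReal.coe_ne_bot r)).comp hφk
      simpa using h1
    · exact Tendsto.inner hvk (tendsto_const_nhds.sub hxk)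
  have hlim : r + (inner ℝ v (z - x) : ℝ) ≤ s := le_of_tendsto htend hineq
  rw [hx, hs, ← EReal.coe_add, EReal.coe_le_coe_iff]
  exact hlim

lemma csub_le_subderiv {φ : E → EReal} (hbot : ∀ y, φ y ≠ ⊥) {x v : E} {r : ℝ}
    (hx : φ x = (r : EReal)) (h : CSub φ x v) (w : E) :
    ((inner ℝ v w : ℝ) : EReal) ≤ subderiv φ x w := by
  have hlow : ∀ᶠ p : ℝ × E in (𝓝[>] (0:ℝ)) ×ˢ 𝓝 w,
      ((inner ℝ v p.2 : ℝ) : EReal) ≤ ((p.1⁻¹ : ℝ) : EReal) * (φ (x + p.1 • p.2) - φ x) := by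
    filter_upwards [Filter.Eventually.prod_inl (eventually_mem_nhdsWithin) (𝓝 w)] with p hp
    have hp1 : (0:ℝ) < p.1 := hp
    rcases eq_or_ne (φ (x + p.1 • p.2)) ⊤ with htop | hfin
    · rw [htop, hx, EReal.top_sub_coe]
      rw [EReal.coe_mul_top_of_pos (by positivity)]
      exact le_top
    obtain ⟨s, hs⟩ : ∃ s : ℝ, φ (x + p.1 • p.2) = (s : EReal) :=
      ⟨_, (EReal.coe_toReal hfin (hbot _)).symm⟩
    have := h (x + p.1 • p.2)
    rw [hs, hx, ← EReal.coe_add, EReal.coe_le_coe_iff] at this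
    have hinner : (inner ℝ v (x + p.1 • p.2 - x) : ℝ) = p.1 * (inner ℝ v p.2 : ℝ) := by
      rw [add_sub_cancel_left, real_inner_smul_right]
    rw [hinner] at this
    rw [hs, hx, ← EReal.coe_sub, ← EReal.coe_mul, EReal.coe_le_coe_iff]
    have h2 : p.1 * (inner ℝ v p.2 : ℝ) ≤ s - r := by linarith
    calc (inner ℝ v p.2 : ℝ) = p.1⁻¹ * (p.1 * (inner ℝ v p.2 : ℝ)) := by field_simp
      _ ≤ p.1⁻¹ * (s - r) := mul_le_mul_of_nonneg_left h2 (by positivity)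
  have heq : liminf (fun p : ℝ × E => ((inner ℝ v p.2 : ℝ) : EReal))
      ((𝓝[>] (0:ℝ)) ×ˢ 𝓝 w) = ((inner ℝ v w : ℝ) : EReal) := by
    apply Tendsto.liminf_eq
    apply EReal.tendsto_coe.mpr
    have hcont : Tendsto (fun p : ℝ × E => p) ((𝓝[>] (0:ℝ)) ×ˢ 𝓝 w) (𝓝 (0, w)) := by
      rw [nhds_prod_eq]
      exact Filter.prod_mono nhdsWithin_le_nhds le_rfl
    have : Continuous fun p : ℝ × E => (inner ℝ v p.2 : ℝ) :=
      Continuous.inner continuous_const continuous_snd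
    simpa [Function.comp_def] using (this.tendsto (0, w)).comp hcont
  rw [subderiv, ← heq]
  exact liminf_le_liminf hlow

lemma subderiv_le_secant {φ : E → EReal} (hconv : ERealConvexOn φ) (hbot : ∀ y, φ y ≠ ⊥)
    {x : E} {r s : ℝ} (hx : φ x = (r : EReal)) {z : E} (hz : φ (x + z) = (s : EReal)) :
    subderiv φ x z ≤ ((s - r : ℝ) : EReal) := by
  have hmap : map (fun t : ℝ => (t, z)) (𝓝[>] (0:ℝ)) ≤ (𝓝[>] (0:ℝ)) ×ˢ 𝓝 z :=
    Tendsto.prodMk tendsto_id tendsto_const_nhds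
  refine le_trans (liminf_le_liminf_of_le hmap) ?_
  rw [← Filter.liminf_comp]
  have hIoc : Ioc (0:ℝ) 1 ∈ 𝓝[>] (0:ℝ) := Ioc_mem_nhdsGT_of_mem ⟨le_refl 0, one_pos⟩
  have hev : ∀ᶠ t in 𝓝[>] (0:ℝ),
      (fun p : ℝ × E => ((p.1⁻¹ : ℝ) : EReal) * (φ (x + p.1 • p.2) - φ x)) ((fun t => (t, z)) t)
        ≤ ((s - r : ℝ) : EReal) := by
    filter_upwards [hIoc] with t ht
    show ((t⁻¹ : ℝ) : EReal) * (φ (x + t • z) - φ x) ≤ ((s - r : ℝ) : EReal)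
    have hcv := hconv (x + z) x t ht.1.le ht.2
    have harg : t • (x + z) + (1 - t) • x = x + t • z := by module
    rw [harg, hx, hz] at hcv
    have hcv' : φ (x + t • z) ≤ (((t * s + (1 - t) * r : ℝ)) : EReal) := by
      rw [EReal.coe_add, EReal.coe_mul, EReal.coe_mul]
      exact hcv
    rcases eq_or_ne (φ (x + t • z)) ⊤ with htop | hfin
    · rw [htop] at hcv'
      exact absurd (top_le_iff.mp hcv') (EReal.coe_ne_top _)
    obtain ⟨s', hs'⟩ : ∃ s' : ℝ, φ (x + t • z) = (s' : EReal) :=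
      ⟨_, (EReal.coe_toReal hfin (hbot _)).symm⟩
    rw [hs'] at hcv' ⊢
    rw [hx, ← EReal.coe_sub, ← EReal.coe_mul, EReal.coe_le_coe_iff]
    have hsle : s' ≤ t * s + (1 - t) * r := EReal.coe_le_coe_iff.mp hcv'
    have ht0 : (0:ℝ) < t := ht.1
    have hkey : s' - r ≤ t * (s - r) := by nlinarith
    calc t⁻¹ * (s' - r) ≤ t⁻¹ * (t * (s - r)) :=
          mul_le_mul_of_nonneg_left hkey (by positivity)
      _ = s - r := by field_simp
  exact Filter.liminf_le_of_frequently_le hev.frequently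

lemma quad_expand (A : E →L[ℝ] E) (hA : ∀ x y : E, (inner ℝ (A x) y : ℝ) = (inner ℝ x (A y) : ℝ))
    (a y w : E) (t cst : ℝ) :
    1/2 * (inner ℝ (A (y + t • w)) (y + t • w) : ℝ) + (inner ℝ a (y + t • w) : ℝ) + cst
      = (1/2 * (inner ℝ (A y) y : ℝ) + (inner ℝ a y : ℝ) + cst)
        + t * (inner ℝ (A y + a) w : ℝ) + t ^ 2 / 2 * (inner ℝ (A w) w : ℝ) := by
  have h1 : A (y + t • w) = A y + t • A w := by rw [map_add, map_smul]
  have h2 : (inner ℝ (A w) y : ℝ) = (inner ℝ (A y) w : ℝ) := by rw [hA w y, real_inner_comm]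
  rw [h1]
  simp only [inner_add_left, inner_add_right, real_inner_smul_left, real_inner_smul_right, h2]
  ring

lemma poly_isClosed {Ω : Set E} (h : IsPolyhedral Ω) : IsClosed Ω := by
  obtain ⟨k, c, b, rfl⟩ := h
  have : {x : E | ∀ i, (inner ℝ (c i) x : ℝ) ≤ b i} = ⋂ i, {x : E | (inner ℝ (c i) x : ℝ) ≤ b i} := by
    ext x; simp
  rw [this]
  exact isClosed_iInter fun i =>
    isClosed_le (Continuous.inner continuous_const continuous_id) continuous_const

lemma plq_dom_isClosed {ϑ : E → EReal} (R : PLQRepr ϑ) : IsClosed (edom ϑ) := by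
  rw [R.dom_eq]
  exact isClosed_iUnion_of_finite fun i => poly_isClosed (R.poly i)

lemma top_eventually {ϑ : E → EReal} (R : PLQRepr ϑ) {y : E} (htop : ϑ y = ⊤) :
    ∀ᶠ z in 𝓝 y, ϑ z = ⊤ := by
  have hy : y ∈ (edom ϑ)ᶜ := by simp [edom, htop]
  have : (edom ϑ)ᶜ ∈ 𝓝 y := (plq_dom_isClosed R).isOpen_compl.mem_nhds hy
  filter_upwards [this] with z hz
  simpa [edom] using hz

lemma frechet_of_top {ϑ : E → EReal} (R : PLQRepr ϑ) {y : E} (htop : ϑ y = ⊤) (v : E) :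
    v ∈ frechetSubdiff ϑ y := by
  intro ε hε
  filter_upwards [top_eventually R htop] with z hz
  rw [htop, hz, EReal.top_add_coe]

lemma subderiv_of_top {ϑ : E → EReal} (R : PLQRepr ϑ) {y : E} (htop : ϑ y = ⊤) (w : E) :
    subderiv ϑ y w = ⊥ := by
  have hprod : Tendsto (fun p : ℝ × E => y + p.1 • p.2) ((𝓝[>] (0:ℝ)) ×ˢ 𝓝 w) (𝓝 y) := by
    have hcont : Continuous fun p : ℝ × E => y + p.1 • p.2 :=
      continuous_const.add (continuous_fst.smul continuous_snd)
    have h0 : Tendsto (fun p : ℝ × E => p) ((𝓝[>] (0:ℝ)) ×ˢ 𝓝 w) (𝓝 (0, w)) := by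
      rw [nhds_prod_eq]
      exact Filter.prod_mono nhdsWithin_le_nhds le_rfl
    have := (hcont.tendsto (0, w)).comp h0
    simpa [Function.comp_def] using this
  have hev : ∀ᶠ p : ℝ × E in (𝓝[>] (0:ℝ)) ×ˢ 𝓝 w,
      ((p.1⁻¹ : ℝ) : EReal) * (ϑ (y + p.1 • p.2) - ϑ y) = ⊥ := by
    filter_upwards [hprod.eventually (top_eventually R htop),
      Filter.Eventually.prod_inl (eventually_mem_nhdsWithin) (𝓝 w)] with p hp hp1
    rw [hp, htop]
    have h1 : (⊤ : EReal) - ⊤ = ⊥ := rfl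
    rw [h1, EReal.coe_mul_bot_of_pos (inv_pos.mpr hp1)]
  rw [subderiv, liminf_congr hev]
  exact liminf_const ⊥

lemma feas_dir {k : ℕ} (c : Fin k → E) (b : Fin k → ℝ) {y z : E}
    (hy : ∀ j, (inner ℝ (c j) y : ℝ) ≤ b j)
    (hz : ∀ j, (inner ℝ (c j) y : ℝ) = b j → (inner ℝ (c j) z : ℝ) ≤ 0) :
    ∀ᶠ t in 𝓝[>] (0:ℝ), ∀ j, (inner ℝ (c j) (y + t • z) : ℝ) ≤ b j := by
  rw [eventually_all]
  intro j
  rcases eq_or_lt_of_le (hy j) with heq | hlt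
  · filter_upwards [self_mem_nhdsWithin] with t (ht : (0:ℝ) < t)
    rw [inner_add_right, real_inner_smul_right]
    have := hz j heq
    nlinarith
  · have hcont : Tendsto (fun t : ℝ => (inner ℝ (c j) y : ℝ) + t * (inner ℝ (c j) z : ℝ))
        (𝓝[>] (0:ℝ)) (𝓝 ((inner ℝ (c j) y : ℝ))) := by
      have : Continuous fun t : ℝ => (inner ℝ (c j) y : ℝ) + t * (inner ℝ (c j) z : ℝ) :=
        continuous_const.add (continuous_id.mul continuous_const)
      have := this.tendsto 0
      simp only [zero_mul, add_zero] at this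
      exact this.mono_left nhdsWithin_le_nhds
    filter_upwards [hcont.eventually (isOpen_Iio.mem_nhds hlt)] with t ht
    rw [inner_add_right, real_inner_smul_right]
    exact le_of_lt ht

lemma subderiv_le_ell {ϑ : E → EReal} (R : PLQRepr ϑ) {y : E} {r : ℝ} (hy : ϑ y = (r : EReal))
    (i : Fin R.s) (hyi : y ∈ R.piece i) {z : E}
    (hz : ∀ᶠ t in 𝓝[>] (0:ℝ), y + t • z ∈ R.piece i) :
    subderiv ϑ y z ≤ ((inner ℝ (R.A i y + R.a i) z : ℝ) : EReal) := by
  have hmap : map (fun t : ℝ => (t, z)) (𝓝[>] (0:ℝ)) ≤ (𝓝[>] (0:ℝ)) ×ˢ 𝓝 z :=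
    Tendsto.prodMk tendsto_id tendsto_const_nhds
  refine le_trans (liminf_le_liminf_of_le hmap) ?_
  rw [← Filter.liminf_comp]
  have hqy : 1/2 * (inner ℝ (R.A i y) y : ℝ) + (inner ℝ (R.a i) y : ℝ) + R.cst i = r := by
    have := R.val i y hyi
    rw [hy] at this
    exact_mod_cast this.symm
  have hcong : ∀ᶠ t in 𝓝[>] (0:ℝ),
      ((fun p : ℝ × E => ((p.1⁻¹ : ℝ) : EReal) * (ϑ (y + p.1 • p.2) - ϑ y)) ∘ fun t => (t, z)) t
        = ((((inner ℝ (R.A i y + R.a i) z : ℝ)) + t/2 * (inner ℝ (R.A i z) z : ℝ) : ℝ) : EReal) := by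
    filter_upwards [hz, self_mem_nhdsWithin] with t htz (ht : (0:ℝ) < t)
    have hval := R.val i _ htz
    show ((t⁻¹ : ℝ) : EReal) * (ϑ (y + t • z) - ϑ y) = _
    rw [hval, hy, ← EReal.coe_sub, ← EReal.coe_mul, EReal.coe_eq_coe_iff]
    rw [quad_expand (R.A i) (R.symm i) (R.a i) y z t (R.cst i), hqy]
    field_simp
    ring
  rw [liminf_congr hcong]
  have htend : Tendsto (fun t : ℝ =>
      ((((inner ℝ (R.A i y + R.a i) z : ℝ)) + t/2 * (inner ℝ (R.A i z) z : ℝ) : ℝ) : EReal))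
      (𝓝[>] (0:ℝ)) (𝓝 (((inner ℝ (R.A i y + R.a i) z : ℝ) : EReal))) := by
    apply EReal.tendsto_coe.mpr
    have : Continuous fun t : ℝ =>
        ((inner ℝ (R.A i y + R.a i) z : ℝ)) + t/2 * (inner ℝ (R.A i z) z : ℝ) :=
      continuous_const.add ((continuous_id.div_const 2).mul continuous_const)
    have := this.tendsto 0
    simp only [zero_div, zero_mul, add_zero] at this
    exact this.mono_left nhdsWithin_le_nhds
  exact le_of_eq htend.liminf_eq

lemma lower_bound {ϑ : E → EReal} (R : PLQRepr ϑ)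
    (k : Fin R.s → ℕ) (cc : ∀ i, Fin (k i) → E) (bb : ∀ i, Fin (k i) → ℝ)
    (hrep : ∀ i, R.piece i = {x : E | ∀ j, (inner ℝ (cc i j) x : ℝ) ≤ bb i j})
    {y : E} {r : ℝ} (hy : ϑ y = (r : EReal)) (z : E) (x : EReal)
    (h : ∀ i, y ∈ R.piece i →
      (∀ j, (inner ℝ (cc i j) y : ℝ) = bb i j → (inner ℝ (cc i j) z : ℝ) ≤ 0) →
      x < ((inner ℝ (R.A i y + R.a i) z : ℝ) : EReal)) (hxt : x < ⊤) :
    x ≤ subderiv ϑ y z := by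
  have hprod : Tendsto (fun p : ℝ × E => p) ((𝓝[>] (0:ℝ)) ×ˢ 𝓝 z) (𝓝 (0, z)) := by
    rw [nhds_prod_eq]
    exact Filter.prod_mono nhdsWithin_le_nhds le_rfl
  have hev : ∀ i : Fin R.s, ∀ᶠ p : ℝ × E in (𝓝[>] (0:ℝ)) ×ˢ 𝓝 z,
      y + p.1 • p.2 ∈ R.piece i →
        x < ((p.1⁻¹ : ℝ) : EReal) * (ϑ (y + p.1 • p.2) - ϑ y) := by
    intro i
    by_cases hyi : y ∈ R.piece i
    · by_cases hTz : ∀ j, (inner ℝ (cc i j) y : ℝ) = bb i j → (inner ℝ (cc i j) z : ℝ) ≤ 0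
      · -- case 1
        have hx := h i hyi hTz
        obtain ⟨x', hx1, hx2⟩ := EReal.exists_between_coe_real hx
        have hcont : Tendsto (fun p : ℝ × E =>
            ((inner ℝ (R.A i y + R.a i) p.2 : ℝ)) + p.1/2 * (inner ℝ (R.A i p.2) p.2 : ℝ))
            ((𝓝[>] (0:ℝ)) ×ˢ 𝓝 z) (𝓝 ((inner ℝ (R.A i y + R.a i) z : ℝ))) := by
          have hc : Continuous fun p : ℝ × E =>
              ((inner ℝ (R.A i y + R.a i) p.2 : ℝ)) + p.1/2 * (inner ℝ (R.A i p.2) p.2 : ℝ) := by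
            apply Continuous.add
            · exact Continuous.inner continuous_const continuous_snd
            · exact ((continuous_fst.div_const 2).mul
                (Continuous.inner ((R.A i).continuous.comp continuous_snd) continuous_snd))
          have := hc.tendsto (0, z)
          simp only [zero_div, zero_mul, add_zero] at this
          exact this.comp hprod
        have hgt := hcont.eventually (isOpen_Ioi.mem_nhds (show x' < _ from EReal.coe_lt_coe_iff.mp hx2))
        filter_upwards [hgt, Filter.Eventually.prod_inl (eventually_mem_nhdsWithin) (𝓝 z)]
          with p hp (hp1 : (0:ℝ) < p.1) hmem
        have hval := R.val i _ hmem
        have hqy : 1/2 * (inner ℝ (R.A i y) y : ℝ) + (inner ℝ (R.a i) y : ℝ) + R.cst i = r := by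
          have := R.val i y hyi
          rw [hy] at this
          exact_mod_cast this.symm
        rw [hval, hy, ← EReal.coe_sub, ← EReal.coe_mul]
        refine lt_of_lt_of_le hx1 (EReal.coe_le_coe_iff.mpr ?_)
        have hexp := quad_expand (R.A i) (R.symm i) (R.a i) y p.2 p.1 (R.cst i)
        rw [hqy] at hexp
        rw [hexp]
        have : p.1⁻¹ * (r + p.1 * (inner ℝ (R.A i y + R.a i) p.2 : ℝ)
            + p.1 ^ 2 / 2 * (inner ℝ (R.A i p.2) p.2 : ℝ) - r)
            = (inner ℝ (R.A i y + R.a i) p.2 : ℝ) + p.1/2 * (inner ℝ (R.A i p.2) p.2 : ℝ) := by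
          field_simp
          ring
        rw [this]
        exact le_of_lt hp
      · -- case 2: some active constraint violated by z
        push_neg at hTz
        obtain ⟨j, hact, hzpos'⟩ := hTz
        have hcont : Tendsto (fun p : ℝ × E => (inner ℝ (cc i j) p.2 : ℝ))
            ((𝓝[>] (0:ℝ)) ×ˢ 𝓝 z) (𝓝 ((inner ℝ (cc i j) z : ℝ))) :=
          ((Continuous.inner continuous_const continuous_snd).tendsto (0, z)).comp hprod
        filter_upwards [hcont.eventually (isOpen_Ioi.mem_nhds hzpos'),
          Filter.Eventually.prod_inl (eventually_mem_nhdsWithin) (𝓝 z)]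
          with p hp (hp1 : (0:ℝ) < p.1) hmem
        exfalso
        rw [hrep i] at hmem
        have := hmem j
        rw [inner_add_right, real_inner_smul_right, hact] at this
        nlinarith [hp, hp1]
    · -- case 3: y not in piece i
      have hyi' := hyi
      rw [hrep i, mem_setOf_eq] at hyi'
      push_neg at hyi'
      obtain ⟨j, hviol'⟩ := hyi'
      have hcont : Tendsto (fun p : ℝ × E => (inner ℝ (cc i j) (y + p.1 • p.2) : ℝ))
          ((𝓝[>] (0:ℝ)) ×ˢ 𝓝 z) (𝓝 ((inner ℝ (cc i j) y : ℝ))) := by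
        have hc : Continuous fun p : ℝ × E => (inner ℝ (cc i j) (y + p.1 • p.2) : ℝ) :=
          Continuous.inner continuous_const (continuous_const.add (continuous_fst.smul continuous_snd))
        have := hc.tendsto (0, z)
        simp only [zero_smul, add_zero] at this
        exact this.comp hprod
      filter_upwards [hcont.eventually (isOpen_Ioi.mem_nhds hviol')] with p hp hmem
      exfalso
      rw [hrep i] at hmem
      exact absurd (hmem j) (not_le_of_gt hp)
  refine Filter.le_liminf_of_le (by isBoundedDefault) ?_
  filter_upwards [eventually_all.mpr hev,
    Filter.Eventually.prod_inl (eventually_mem_nhdsWithin) (𝓝 z)] with p hall (hp1 : (0:ℝ) < p.1)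
  rcases eq_or_ne (ϑ (y + p.1 • p.2)) ⊤ with htop | hfin
  · rw [htop, hy, EReal.top_sub_coe, EReal.coe_mul_top_of_pos (by positivity)]
    exact le_top
  · have hdom : y + p.1 • p.2 ∈ edom ϑ := hfin
    rw [R.dom_eq] at hdom
    obtain ⟨i, hi⟩ := mem_iUnion.mp hdom
    exact le_of_lt (hall i hi)

lemma conic_caratheodory {N : ℕ} (c : Fin N → E) :
    ∀ (n : ℕ) (μ : Fin N → ℝ), (∀ j, 0 ≤ μ j) →
      (Finset.univ.filter fun j => μ j ≠ 0).card ≤ n →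
      ∃ S : Finset (Fin N), LinearIndependent ℝ (fun j : S => c j) ∧
        ∃ ν : Fin N → ℝ, (∀ j, 0 ≤ ν j) ∧ (∀ j, j ∉ S → ν j = 0) ∧
          ∑ j, ν j • c j = ∑ j, μ j • c j := by
  classical
  intro n
  induction n with
  | zero =>
    intro μ hμ hcard
    have hzero : ∀ j, μ j = 0 := by
      intro j
      by_contra hj
      have : j ∈ Finset.univ.filter fun j => μ j ≠ 0 := by simp [hj]
      have := Finset.card_pos.mpr ⟨j, this⟩
      omega
    refine ⟨∅, ?_, μ, hμ, fun j _ => hzero j, rfl⟩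
    haveI : IsEmpty ((∅ : Finset (Fin N)) : Type) := by
      simp only [Finset.isEmpty_coe_sort]
    exact linearIndependent_empty_type
  | succ n ih =>
    intro μ hμ hcard
    set S := Finset.univ.filter fun j => μ j ≠ 0 with hS_def
    by_cases hLI : LinearIndependent ℝ (fun j : S => c j)
    · refine ⟨S, hLI, μ, hμ, fun j hj => ?_, rfl⟩
      by_contra hne
      exact hj (by simp [hS_def, hne])
    · obtain ⟨g, hgsum, i0, hgi0⟩ := Fintype.not_linearIndependent_iff.mp hLI
      set gg : Fin N → ℝ := fun j => if h : j ∈ S then g ⟨j, h⟩ else 0 with hgg_def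
      have hggS : ∀ j, j ∉ S → gg j = 0 := by
        intro j hj
        simp [hgg_def, hj]
      have hggsum : ∑ j, gg j • c j = 0 := by
        rw [← Finset.sum_subset (Finset.subset_univ S)
          (fun j _ hj => by rw [hggS j hj, zero_smul])]
        rw [← Finset.sum_attach S (fun j => gg j • c j)]
        rw [← hgsum]
        apply Finset.sum_congr rfl
        intro j _
        simp [hgg_def, j.2]
      have hex : ∃ g' : Fin N → ℝ, (∀ j, j ∉ S → g' j = 0) ∧ (∑ j, g' j • c j = 0) ∧
          ∃ j ∈ S, 0 < g' j := by
        by_cases hpos : ∃ j ∈ S, 0 < gg j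
        · exact ⟨gg, hggS, hggsum, hpos⟩
        · refine ⟨-gg, fun j hj => by simp [hggS j hj], ?_, ?_⟩
          · simp only [Pi.neg_apply, neg_smul, Finset.sum_neg_distrib, hggsum, neg_zero]
          · refine ⟨i0, i0.2, ?_⟩
            push_neg at hpos
            have h1 : gg i0 ≤ 0 := hpos i0 i0.2
            have h2 : gg i0 ≠ 0 := by
              have : gg (i0 : Fin N) = g i0 := by
                simp only [hgg_def]
                rw [dif_pos i0.2]
              rw [this]
              exact hgi0
            simp only [Pi.neg_apply]
            cases lt_or_eq_of_le h1 with
            | inl h => linarith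
            | inr h => exact absurd h h2
      obtain ⟨g', hg'S, hg'sum, hg'pos⟩ := hex
      set T := S.filter fun j => 0 < g' j with hT_def
      have hTne : T.Nonempty := by
        obtain ⟨j, hjS, hjpos⟩ := hg'pos
        exact ⟨j, by simp [hT_def, hjS, hjpos]⟩
      obtain ⟨jm, hjmT, hjmmin⟩ := T.exists_min_image (fun j => μ j / g' j) hTne
      have hjmS : jm ∈ S := (Finset.mem_filter.mp hjmT).1
      have hgjm : 0 < g' jm := (Finset.mem_filter.mp hjmT).2
      set ts := μ jm / g' jm with hts_def
      have hts0 : 0 ≤ ts := div_nonneg (hμ jm) hgjm.le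
      set ν : Fin N → ℝ := fun j => μ j - ts * g' j with hν_def
      have hν0 : ∀ j, 0 ≤ ν j := by
        intro j
        simp only [hν_def]
        by_cases hj : 0 < g' j
        · have hjT : j ∈ T := by
            refine Finset.mem_filter.mpr ⟨?_, hj⟩
            by_contra hjS
            rw [hg'S j hjS] at hj
            exact lt_irrefl 0 hj
          have := hjmmin j hjT
          rw [hts_def]
          rw [div_le_div_iff₀ hgjm hj] at this
          have h3 : μ jm / g' jm * g' j ≤ μ j := by
            rw [div_mul_eq_mul_div, div_le_iff₀ hgjm]
            linarith
          linarith
        · push_neg at hj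
          nlinarith [mul_nonneg hts0 (neg_nonneg.mpr hj), hμ j]
      have hνjm : ν jm = 0 := by
        simp only [hν_def, hts_def]
        field_simp
        ring
      have hνout : ∀ j, j ∉ S → ν j = 0 := by
        intro j hj
        have h1 : μ j = 0 := by
          by_contra hne
          exact hj (by simp [hS_def, hne])
        simp [hν_def, h1, hg'S j hj]
      have hcard' : (Finset.univ.filter fun j => ν j ≠ 0).card ≤ n := by
        have hsub : (Finset.univ.filter fun j => ν j ≠ 0) ⊆ S.erase jm := by
          intro j hj
          simp only [Finset.mem_filter] at hj
          refine Finset.mem_erase.mpr ⟨?_, ?_⟩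
          · rintro rfl
            exact hj.2 hνjm
          · by_contra hjS
            exact hj.2 (hνout j hjS)
        have h1 := Finset.card_le_card hsub
        have h2 : (S.erase jm).card = S.card - 1 := Finset.card_erase_of_mem hjmS
        have h3 : 1 ≤ S.card := Finset.card_pos.mpr ⟨jm, hjmS⟩
        omega
      have hνsum : ∑ j, ν j • c j = ∑ j, μ j • c j := by
        simp only [hν_def, sub_smul, Finset.sum_sub_distrib]
        have hz : ∑ j, (ts * g' j) • c j = ts • ∑ j, g' j • c j := by
          rw [Finset.smul_sum]
          exact Finset.sum_congr rfl fun j _ => by rw [smul_smul]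
        rw [hz, hg'sum, smul_zero, sub_zero]
      obtain ⟨S', hLI', ν', hν'0, hν'out, hν'sum⟩ := ih ν hν0 hcard'
      exact ⟨S', hLI', ν', hν'0, hν'out, by rw [hν'sum, hνsum]⟩
lemma sum_extend {N : ℕ} (S : Finset (Fin N)) (f : Fin N → ℝ) (c : Fin N → E)
    (hf : ∀ j, j ∉ S → f j = 0) :
    ∑ j : S, f (j : Fin N) • c (j : Fin N) = ∑ j, f j • c j := by
  rw [← Finset.sum_subset (Finset.subset_univ S) (fun j _ hj => by rw [hf j hj, zero_smul])]
  rw [← Finset.sum_attach S (fun j => f j • c j), Finset.univ_eq_attach]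

lemma coneOf_isClosed [FiniteDimensional ℝ E] {N : ℕ} (c : Fin N → E) :
    IsClosed {x : E | ∃ μ : Fin N → ℝ, (∀ j, 0 ≤ μ j) ∧ x = ∑ j, μ j • c j} := by
  classical
  have hunion : {x : E | ∃ μ : Fin N → ℝ, (∀ j, 0 ≤ μ j) ∧ x = ∑ j, μ j • c j}
      = ⋃ S : Finset (Fin N), ⋃ (_ : LinearIndependent ℝ (fun j : S => c j)),
        (fun μ : (S → ℝ) => ∑ j : S, μ j • c (j : Fin N)) '' {μ | ∀ j, 0 ≤ μ j} := by
    ext x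
    simp only [mem_setOf_eq, mem_iUnion, mem_image]
    constructor
    · rintro ⟨μ, hμ0, rfl⟩
      obtain ⟨S, hLI, ν, hν0, hνout, hνsum⟩ :=
        conic_caratheodory c N μ hμ0 (le_trans (Finset.card_le_univ _) (by simp))
      refine ⟨S, hLI, fun j : S => ν j, fun j => hν0 j, ?_⟩
      rw [show (∑ j : S, ν (j : Fin N) • c (j : Fin N)) = ∑ j, ν j • c j from
        sum_extend S ν c hνout, hνsum]
    · rintro ⟨S, hLI, μ, hμ0, rfl⟩
      set ext : Fin N → ℝ := fun j => if h : j ∈ S then μ ⟨j, h⟩ else 0 with hext_def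
      refine ⟨ext, ?_, ?_⟩
      · intro j
        by_cases h : j ∈ S
        · simp only [hext_def, dif_pos h]
          exact hμ0 _
        · simp [hext_def, dif_neg h]
      · rw [← sum_extend S ext c (fun j hj => by simp [hext_def, dif_neg hj])]
        exact (Finset.sum_congr rfl fun j _ => by simp [hext_def, dif_pos j.2]).symm
  rw [hunion]
  apply isClosed_iUnion_of_finite
  intro S
  by_cases hLI : LinearIndependent ℝ (fun j : S => c j)
  · simp only [hLI, iUnion_true]
    set L : (S → ℝ) →ₗ[ℝ] E :=
      { toFun := fun μ => ∑ j : S, μ j • c (j : Fin N)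
        map_add' := fun μ μ' => by
          simp only [Pi.add_apply, add_smul, Finset.sum_add_distrib]
        map_smul' := fun t μ => by
          simp only [Pi.smul_apply, smul_eq_mul, RingHom.id_apply, Finset.smul_sum,
            smul_smul] } with hL_def
    have hinj : Function.Injective L := by
      rw [← LinearMap.ker_eq_bot, LinearMap.ker_eq_bot']
      intro μ hμ
      have := Fintype.linearIndependent_iff.mp hLI μ hμ
      funext j
      exact this j
    have hclosed : IsClosed {μ : S → ℝ | ∀ j, 0 ≤ μ j} := by
      have : {μ : S → ℝ | ∀ j, 0 ≤ μ j} = ⋂ j, {μ : S → ℝ | 0 ≤ μ j} := by ext; simp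
      rw [this]
      exact isClosed_iInter fun j => isClosed_le continuous_const (continuous_apply j)
    exact ((LinearMap.isClosedEmbedding_of_injective
      (LinearMap.ker_eq_bot.mpr hinj)).isClosedMap _ hclosed)
  · simp only [hLI, iUnion_false, iUnion_empty]
    exact isClosed_empty

lemma farkas [FiniteDimensional ℝ E] {N : ℕ} (c : Fin N → E) (u : E)
    (hu : ∀ z : E, (∀ j, (inner ℝ (c j) z : ℝ) ≤ 0) → (inner ℝ u z : ℝ) ≤ 0) :
    ∃ μ : Fin N → ℝ, (∀ j, 0 ≤ μ j) ∧ u = ∑ j, μ j • c j := by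
  classical
  set C : Set E := {x : E | ∃ μ : Fin N → ℝ, (∀ j, 0 ≤ μ j) ∧ x = ∑ j, μ j • c j} with hC_def
  let K : ProperCone ℝ E :=
    { carrier := C
      zero_mem' := ⟨fun _ => 0, fun _ => le_refl 0, by simp⟩
      add_mem' := by
        intro a b ha hb
        obtain ⟨μ, hμ0, rfl⟩ := ha
        obtain ⟨μ', hμ'0, rfl⟩ := hb
        exact ⟨fun j => μ j + μ' j, fun j => add_nonneg (hμ0 j) (hμ'0 j), by
          simp only [add_smul, Finset.sum_add_distrib]⟩
      smul_mem' := by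
        intro t x hx
        obtain ⟨μ, hμ0, rfl⟩ := hx
        refine ⟨fun j => t.1 * μ j, fun j => mul_nonneg t.2 (hμ0 j), ?_⟩
        have h1 : t • ∑ j, μ j • c j = t.1 • ∑ j, μ j • c j := rfl
        rw [h1, Finset.smul_sum]
        exact Finset.sum_congr rfl fun j _ => (smul_smul t.1 (μ j) (c j))
      isClosed' := coneOf_isClosed c }
  have hmemK : u ∈ K := by
    rw [← ProperCone.innerDual_innerDual K]
    apply ProperCone.mem_innerDual.mpr
    intro x hx
    have hcj : ∀ j, c j ∈ K := by
      intro j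
      refine ⟨fun j' => if j' = j then 1 else 0, fun j' => by dsimp only; split <;> norm_num, ?_⟩
      symm
      rw [Finset.sum_eq_single j]
      · simp
      · intro b _ hb
        simp [hb]
      · intro hj
        exact absurd (Finset.mem_univ j) hj
    have hz : ∀ j', (inner ℝ (c j') (-x) : ℝ) ≤ 0 := by
      intro j'
      rw [inner_neg_right]
      have := ProperCone.mem_innerDual.mp hx (hcj j')
      linarith
    have := hu (-x) hz
    rw [inner_neg_right] at this
    rw [real_inner_comm]
    linarith
  exact hmemK

lemma propA {ϑ : E → EReal} (hconv : ERealConvexOn ϑ) (hbot : ∀ y, ϑ y ≠ ⊥)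
    (R : PLQRepr ϑ) {y lamb lam : E} (hlam : lam ∈ limSubdiff ϑ y) :
    lam - lamb ∈ polarCone (critCone ϑ y lamb) := by
  intro w hw
  rcases eq_or_ne (ϑ y) ⊤ with htop | hfin
  · exact absurd ((subderiv_of_top R htop w).symm.trans hw) (by simp)
  obtain ⟨r, hr⟩ : ∃ r : ℝ, ϑ y = (r : EReal) :=
    ⟨(ϑ y).toReal, (EReal.coe_toReal hfin (hbot y)).symm⟩
  have hcs : CSub ϑ y lam := lim_csub hconv hbot hr hlam
  have h2 := csub_le_subderiv hbot hr hcs w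
  rw [hw] at h2
  have := EReal.coe_le_coe_iff.mp h2
  rw [inner_sub_left]
  linarith

lemma propB [FiniteDimensional ℝ E] {ϑ : E → EReal} (hconv : ERealConvexOn ϑ)
    (hbot : ∀ y, ϑ y ≠ ⊥) (R : PLQRepr ϑ) {y lamb : E} (hlamb : lamb ∈ limSubdiff ϑ y)
    {u : E} (hu : u ∈ polarCone (critCone ϑ y lamb)) :
    ∃ ε : ℝ, 0 < ε ∧ lamb + ε • u ∈ limSubdiff ϑ y := by
  classical
  rcases eq_or_ne (ϑ y) ⊤ with htop | hfin
  · exact ⟨1, one_pos, frechet_subset_lim ϑ y (frechet_of_top R htop _)⟩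
  obtain ⟨r, hr⟩ : ∃ r : ℝ, ϑ y = (r : EReal) :=
    ⟨(ϑ y).toReal, (EReal.coe_toReal hfin (hbot y)).symm⟩
  have hcs : CSub ϑ y lamb := lim_csub hconv hbot hr hlamb
  -- polyhedral data for the pieces
  choose k cc bb hrep using fun i => R.poly i
  -- per-piece multipliers from Farkas
  have key : ∀ i : Fin R.s, ∃ ν : ℝ, 0 ≤ ν ∧ ∀ z : E, y ∈ R.piece i →
      (∀ j, (inner ℝ (cc i j) y : ℝ) = bb i j → (inner ℝ (cc i j) z : ℝ) ≤ 0) →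
      (inner ℝ u z : ℝ) ≤ ν * ((inner ℝ (R.A i y + R.a i) z : ℝ) - (inner ℝ lamb z : ℝ)) := by
    intro i
    by_cases hyi : y ∈ R.piece i
    · set d : E := R.A i y + R.a i - lamb with hd_def
      set c' : Fin (k i + 1) → E :=
        Fin.snoc (fun j => if (inner ℝ (cc i j) y : ℝ) = bb i j then cc i j else 0) d with hc'_def
      have hfar : ∃ μ : Fin (k i + 1) → ℝ, (∀ j, 0 ≤ μ j) ∧ u = ∑ j, μ j • c' j := by
        apply farkas
        intro z hz
        have hT : ∀ j, (inner ℝ (cc i j) y : ℝ) = bb i j → (inner ℝ (cc i j) z : ℝ) ≤ 0 := by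
          intro j hj
          have := hz j.castSucc
          rw [hc'_def, Fin.snoc_castSucc, if_pos hj] at this
          exact this
        have hd : (inner ℝ d z : ℝ) ≤ 0 := by
          have := hz (Fin.last _)
          rw [hc'_def, Fin.snoc_last] at this
          exact this
        -- z is in the critical cone
        have hfeas : ∀ᶠ t in 𝓝[>] (0:ℝ), y + t • z ∈ R.piece i := by
          have hy' : ∀ j, (inner ℝ (cc i j) y : ℝ) ≤ bb i j := by
            have := hyi
            rw [hrep i] at this
            exact this
          filter_upwards [feas_dir (cc i) (bb i) hy' hT] with t ht
          rw [hrep i]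
          exact ht
        have h1 := subderiv_le_ell R hr i hyi hfeas
        have h2 := csub_le_subderiv hbot hr hcs z
        have hinnerd : (inner ℝ d z : ℝ)
            = (inner ℝ (R.A i y + R.a i) z : ℝ) - (inner ℝ lamb z : ℝ) := by
          rw [hd_def, inner_sub_left]
        have hcrit : z ∈ critCone ϑ y lamb := by
          have hle : subderiv ϑ y z ≤ ((inner ℝ lamb z : ℝ) : EReal) := by
            refine le_trans h1 (EReal.coe_le_coe_iff.mpr ?_)
            rw [hinnerd] at hd
            linarith
          exact le_antisymm hle h2
        exact hu z hcrit
      obtain ⟨μ, hμ0, hμ⟩ := hfar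
      refine ⟨μ (Fin.last _), hμ0 _, ?_⟩
      intro z _ hTz
      have hexp : (inner ℝ u z : ℝ) = ∑ j, μ j * (inner ℝ (c' j) z : ℝ) := by
        rw [hμ, sum_inner]
        exact Finset.sum_congr rfl fun j _ => real_inner_smul_left _ _ _
      rw [hexp, Fin.sum_univ_castSucc]
      have hlast : μ (Fin.last (k i)) * (inner ℝ (c' (Fin.last (k i))) z : ℝ)
          = μ (Fin.last (k i)) * ((inner ℝ (R.A i y + R.a i) z : ℝ) - (inner ℝ lamb z : ℝ)) := by
        rw [hc'_def, Fin.snoc_last, hd_def, inner_sub_left]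
      rw [hlast]
      have hnonpos : ∀ j : Fin (k i), μ j.castSucc * (inner ℝ (c' j.castSucc) z : ℝ) ≤ 0 := by
        intro j
        rw [hc'_def, Fin.snoc_castSucc]
        by_cases hact : (inner ℝ (cc i j) y : ℝ) = bb i j
        · rw [if_pos hact]
          exact mul_nonpos_of_nonneg_of_nonpos (hμ0 _) (hTz j hact)
        · rw [if_neg hact]
          simp
      have hsum : ∑ j : Fin (k i), μ j.castSucc * (inner ℝ (c' j.castSucc) z : ℝ) ≤ 0 :=
        Finset.sum_nonpos fun j _ => hnonpos j
      linarith
    · exact ⟨0, le_refl 0, fun z hy' => absurd hy' hyi⟩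
  choose ν hν0 hν using key
  set M : ℝ := 1 + ∑ i, ν i with hM_def
  have hM1 : 1 ≤ M := by
    have : 0 ≤ ∑ i, ν i := Finset.sum_nonneg fun i _ => hν0 i
    linarith
  have hMpos : 0 < M := by linarith
  have hνM : ∀ i, ν i ≤ M := by
    intro i
    have := Finset.single_le_sum (fun i _ => hν0 i) (Finset.mem_univ i)
    linarith
  refine ⟨M⁻¹, by positivity, frechet_subset_lim ϑ y (csub_mem_frechet ?_)⟩
  intro zz
  rcases eq_or_ne (ϑ zz) ⊤ with hzz | hzz
  · simp [hzz]
  obtain ⟨s, hs⟩ : ∃ s : ℝ, ϑ zz = (s : EReal) :=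
    ⟨(ϑ zz).toReal, (EReal.coe_toReal hzz (hbot zz)).symm⟩
  set z : E := zz - y with hz_def
  have hyz : y + z = zz := by rw [hz_def]; abel
  have hsec : subderiv ϑ y z ≤ ((s - r : ℝ) : EReal) := by
    apply subderiv_le_secant hconv hbot hr
    rw [hyz, hs]
  -- find a good piece
  have hex : ∃ i, y ∈ R.piece i ∧
      (∀ j, (inner ℝ (cc i j) y : ℝ) = bb i j → (inner ℝ (cc i j) z : ℝ) ≤ 0) ∧
      (inner ℝ (R.A i y + R.a i) z : ℝ) ≤ s - r := by
    by_contra hcon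
    push_neg at hcon
    set T : Finset (Fin R.s) := Finset.univ.filter fun i => y ∈ R.piece i ∧
      (∀ j, (inner ℝ (cc i j) y : ℝ) = bb i j → (inner ℝ (cc i j) z : ℝ) ≤ 0) with hT_def
    rcases T.eq_empty_or_nonempty with hTe | hTne
    · have := lower_bound R k cc bb hrep hr z ((s - r + 1 : ℝ) : EReal)
        (fun i h1 h2 => by
          have : i ∈ T := Finset.mem_filter.mpr ⟨Finset.mem_univ i, h1, h2⟩
          rw [hTe] at this
          exact absurd this (Finset.notMem_empty i))
        (EReal.coe_lt_top _)
      have := le_trans this hsec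
      have := EReal.coe_le_coe_iff.mp this
      linarith
    · set m : ℝ := (T.image fun i => (inner ℝ (R.A i y + R.a i) z : ℝ)).min'
        (hTne.image _) with hm_def
      have hmlt : s - r < m := by
        obtain ⟨i0, hi0, hmi0⟩ := Finset.mem_image.mp
          (Finset.min'_mem (T.image fun i => (inner ℝ (R.A i y + R.a i) z : ℝ)) (hTne.image _))
        have hi0' := Finset.mem_filter.mp hi0
        rw [hm_def, ← hmi0]
        exact hcon i0 hi0'.2.1 hi0'.2.2
      set x : ℝ := (s - r + m) / 2 with hx_def
      have hx1 : s - r < x := by rw [hx_def]; linarith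
      have hx2 : x < m := by rw [hx_def]; linarith
      have := lower_bound R k cc bb hrep hr z ((x : ℝ) : EReal)
        (fun i h1 h2 => by
          have hiT : i ∈ T := Finset.mem_filter.mpr ⟨Finset.mem_univ i, h1, h2⟩
          have : m ≤ (inner ℝ (R.A i y + R.a i) z : ℝ) :=
            Finset.min'_le _ _ (Finset.mem_image_of_mem _ hiT)
          exact EReal.coe_lt_coe_iff.mpr (by linarith))
        (EReal.coe_lt_top _)
      have := le_trans this hsec
      have := EReal.coe_le_coe_iff.mp this
      linarith
  obtain ⟨i, hyi, hTzi, hli⟩ := hex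
  have huz := hν i z hyi hTzi
  have hd0 : 0 ≤ (inner ℝ (R.A i y + R.a i) z : ℝ) - (inner ℝ lamb z : ℝ) := by
    have hfeas : ∀ᶠ t in 𝓝[>] (0:ℝ), y + t • z ∈ R.piece i := by
      have hy' : ∀ j, (inner ℝ (cc i j) y : ℝ) ≤ bb i j := by
        have := hyi
        rw [hrep i] at this
        exact this
      filter_upwards [feas_dir (cc i) (bb i) hy' hTzi] with t ht
      rw [hrep i]
      exact ht
    have h1 := subderiv_le_ell R hr i hyi hfeas
    have h2 := csub_le_subderiv hbot hr hcs z
    have := EReal.coe_le_coe_iff.mp (le_trans h2 h1)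
    linarith
  set D : ℝ := (inner ℝ (R.A i y + R.a i) z : ℝ) - (inner ℝ lamb z : ℝ) with hD_def
  have hstep1 : M⁻¹ * (inner ℝ u z : ℝ) ≤ M⁻¹ * (ν i * D) :=
    mul_le_mul_of_nonneg_left huz (by positivity)
  have hstep2 : M⁻¹ * (ν i * D) ≤ D := by
    have h1 : M⁻¹ * ν i ≤ 1 := by
      rw [inv_mul_le_iff₀ hMpos]
      linarith [hνM i]
    calc M⁻¹ * (ν i * D) = (M⁻¹ * ν i) * D := by ring
      _ ≤ 1 * D := mul_le_mul_of_nonneg_right h1 hd0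
      _ = D := one_mul D
  have hfinal : r + (inner ℝ lamb z : ℝ) + M⁻¹ * (inner ℝ u z : ℝ) ≤ s := by
    have : M⁻¹ * (inner ℝ u z : ℝ) ≤ D := le_trans hstep1 hstep2
    rw [hD_def] at this
    linarith
  rw [hr, hs, ← EReal.coe_add, EReal.coe_le_coe_iff]
  have hinner : (inner ℝ (lamb + M⁻¹ • u) (zz - y) : ℝ)
      = (inner ℝ lamb z : ℝ) + M⁻¹ * (inner ℝ u z : ℝ) := by
    rw [← hz_def, inner_add_left, real_inner_smul_left]
  rw [hinner]
  linarith

end AuxStmt19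

/-- characterization of uniqueness of Lagrange multipliers via the strong
Robinson constraint qualification. -/
theorem stmt19 {n m : ℕ} (φ₀ : Euc n → ℝ) (f : Euc n → Euc m) (ϑ : Euc m → EReal)
    (xb : Euc n) (lamb : Euc m)
    (hφ₀ : TwiceDiffAt φ₀ xb) (hf : TwiceDiffAt f xb)
    (hbot : ∀ y, ϑ y ≠ ⊥) (hplq : IsPLQ ϑ) (hconv : ERealConvexOn ϑ)
    (hkkt1 : gradient φ₀ xb + ContinuousLinearMap.adjoint (fderiv ℝ f xb) lamb = 0)
    (hkkt2 : lamb ∈ limSubdiff ϑ (f xb)) :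
    multSet f ϑ xb (-gradient φ₀ xb) = {lamb} ↔
      polarCone (critCone ϑ (f xb) lamb) ∩
        {u : Euc m | ContinuousLinearMap.adjoint (fderiv ℝ f xb) u = 0} = {0} := by
  classical
  obtain ⟨R⟩ := hplq
  have hTlamb : ContinuousLinearMap.adjoint (fderiv ℝ f xb) lamb = -gradient φ₀ xb :=
    eq_neg_of_add_eq_zero_right hkkt1
  constructor
  · intro hM
    ext u
    simp only [mem_inter_iff, mem_setOf_eq, mem_singleton_iff]
    constructor
    · rintro ⟨hpolar, hker⟩
      obtain ⟨ε, hε, hmem⟩ := propB hconv hbot R hkkt2 hpolar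
      have hmul : lamb + ε • u ∈ multSet f ϑ xb (-gradient φ₀ xb) :=
        ⟨hmem, by rw [map_add, map_smul, hker, smul_zero, add_zero, hTlamb]⟩
      rw [hM, mem_singleton_iff] at hmul
      have hz : ε • u = 0 := by
        have := congrArg (fun w => w - lamb) hmul
        simpa using this
      rcases smul_eq_zero.mp hz with h | h
      · exact absurd h (ne_of_gt hε)
      · exact h
    · rintro rfl
      refine ⟨fun w _ => ?_, map_zero _⟩
      simp [inner_zero_left]
  · intro hS
    ext lam
    simp only [multSet, mem_setOf_eq, mem_singleton_iff]
    constructor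
    · rintro ⟨hlim, hTlam⟩
      have h1 : lam - lamb ∈ polarCone (critCone ϑ (f xb) lamb) := propA hconv hbot R hlim
      have h2 : ContinuousLinearMap.adjoint (fderiv ℝ f xb) (lam - lamb) = 0 := by
        rw [map_sub, hTlam, hTlamb, sub_self]
      have h3 : lam - lamb ∈ polarCone (critCone ϑ (f xb) lamb) ∩
          {u : Euc m | ContinuousLinearMap.adjoint (fderiv ℝ f xb) u = 0} := ⟨h1, h2⟩
      rw [hS, mem_singleton_iff] at h3
      exact sub_eq_zero.mp h3
    · rintro rfl
      exact ⟨hkkt2, hTlamb⟩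
end
end
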